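/- arXiv:0710.4295 — 8 statements merged into one kernel-verified Lean document; each statement's English description precedes it below -/
import Mathlib

section
/- Let δ, γ ∈ ℂ and let (x, y, z) be a solution of the reduced three-wave interaction system (1) on a connected open set U ⊆ ℂ with x(t) ≠ 0 for all t ∈ U. Define X = 1/x, Y = y, Z = z/x². Then for all t ∈ U: dX/dt = 2Y²X² − δYX² − γX − Z, X·dY/dt = 2Y − δ + γXY, and X·dZ/dt = −2Z(1 + Z) − XZ(2 + 2γ − 4XY² + 2δXY). Moreover, the common zeros on the plane X = 0 of the polynomials 2Y − δ + γXY and −2Z(1+Z) − XZ(2 + 2γ − 4XY² + 2δXY) are exactly the two points (0, δ/2, 0) and (0, δ/2, −1). -/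
open Complex

noncomputable section

/-- A solution of the reduced three-wave interaction dynamical system (1)
on a set `U ⊆ ℂ`, with parameters `δ γ : ℂ`. -/
def solTWI (δ γ : ℂ) (x y z : ℂ → ℂ) (U : Set ℂ) : Prop :=
  ∀ t ∈ U,
    HasDerivAt x (-2 * (y t) ^ 2 + γ * x t + δ * y t + z t) t ∧
    HasDerivAt y (2 * x t * y t - δ * x t + γ * y t) t ∧
    HasDerivAt z (-2 * x t * z t - 2 * z t) t

theorem stmt1 (δ γ : ℂ) (U : Set ℂ) (hU : IsOpen U) (hUc : IsConnected U)
    (x y z : ℂ → ℂ) (hsol : solTWI δ γ x y z U) (hx : ∀ t ∈ U, x t ≠ 0) :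
    (∀ t ∈ U,
      HasDerivAt (fun s => 1 / x s)
        (2 * (y t) ^ 2 * (1 / x t) ^ 2 - δ * y t * (1 / x t) ^ 2 - γ * (1 / x t)
          - z t / (x t) ^ 2) t ∧
      (∃ d, HasDerivAt y d t ∧
        (1 / x t) * d = 2 * y t - δ + γ * (1 / x t) * y t) ∧
      (∃ d, HasDerivAt (fun s => z s / (x s) ^ 2) d t ∧
        (1 / x t) * d =
          -2 * (z t / (x t) ^ 2) * (1 + z t / (x t) ^ 2)
            - (1 / x t) * (z t / (x t) ^ 2) *
              (2 + 2 * γ - 4 * (1 / x t) * (y t) ^ 2 + 2 * δ * (1 / x t) * y t))) ∧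
    {P : ℂ × ℂ × ℂ | P.1 = 0 ∧
        2 * P.2.1 - δ + γ * P.1 * P.2.1 = 0 ∧
        -2 * P.2.2 * (1 + P.2.2)
          - P.1 * P.2.2 * (2 + 2 * γ - 4 * P.1 * P.2.1 ^ 2 + 2 * δ * P.1 * P.2.1) = 0} =
      {(0, δ / 2, 0), (0, δ / 2, -1)} := by
  constructor
  · intro t ht
    obtain ⟨hdx, hdy, hdz⟩ := hsol t ht
    have hxt := hx t ht
    refine ⟨?_, ⟨_, hdy, ?_⟩, ⟨_, (hdz.div (hdx.pow 2) (pow_ne_zero 2 hxt)), ?_⟩⟩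
    · have h : HasDerivAt (fun s => (x s)⁻¹) _ t := hdx.fun_inv hxt
      simp only [one_div]
      convert h using 1
      field_simp
      ring
    · field_simp
    · field_simp [hxt]
      ring
  · ext ⟨X, Y, Z⟩
    simp only [Set.mem_setOf_eq, Set.mem_insert_iff, Set.mem_singleton_iff, Prod.mk.injEq]
    constructor
    · rintro ⟨hX, hY, hZ⟩
      subst hX
      simp only [mul_zero, zero_mul, zero_add] at hY hZ
      have hY' : Y = δ / 2 := by linear_combination hY / 2
      have : Z = 0 ∨ Z = -1 := by
        rcases mul_eq_zero.1 (by linear_combination -hZ : Z * (2 + 2 * Z) = 0) with h | h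
        · exact Or.inl h
        · exact Or.inr (by linear_combination h / 2)
      rcases this with h | h
      · exact Or.inl ⟨rfl, hY', h⟩
      · exact Or.inr ⟨rfl, hY', h⟩
    · rintro (⟨h1, h2, h3⟩ | ⟨h1, h2, h3⟩) <;> subst h1 <;> subst h2 <;> subst h3 <;>
        refine ⟨rfl, by ring, by ring⟩
end
end

section
/- Let δ, γ ∈ ℂ, let t₁ ∈ ℂ, and let (x, y, z) be a solution of the reduced three-wave interaction system (1) holomorphic on a punctured disc around t₁ such that x, y, z all extend meromorphically to t₁, y is holomorphic at t₁, and x and z each have a pole at t₁, of orders m ≥ 1 and p ≥ 1 respectively. Then m = 1, p = 2, the leading Laurent coefficient of x at t₁ is 1 (i.e. lim_{t→t₁} (t−t₁)x(t) = 1), the leading Laurent coefficient of z at t₁ is −1 (i.e. lim_{t→t₁} (t−t₁)²z(t) = −1), and y(t₁) = δ/2. -/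
open Complex Filter

noncomputable section

theorem stmt2 (δ γ : ℂ) (t₁ : ℂ) (r : ℝ) (hr : 0 < r)
    (x y z : ℂ → ℂ) (m p : ℕ) (hm : 1 ≤ m) (hp : 1 ≤ p)
    (hsol : solTWI δ γ x y z (Metric.ball t₁ r \ {t₁}))
    -- `x`, `y`, `z` extend meromorphically to `t₁`: `y` is holomorphic at `t₁`,
    -- `x` has a pole of order `m` and `z` a pole of order `p` at `t₁`.
    (X Y Z : ℂ → ℂ)
    (hX : DifferentiableOn ℂ X (Metric.ball t₁ r))
    (hY : DifferentiableOn ℂ Y (Metric.ball t₁ r))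
    (hZ : DifferentiableOn ℂ Z (Metric.ball t₁ r))
    (hX0 : X t₁ ≠ 0) (hZ0 : Z t₁ ≠ 0)
    (hxX : ∀ t ∈ Metric.ball t₁ r \ {t₁}, x t = X t / (t - t₁) ^ m)
    (hyY : ∀ t ∈ Metric.ball t₁ r \ {t₁}, y t = Y t)
    (hzZ : ∀ t ∈ Metric.ball t₁ r \ {t₁}, z t = Z t / (t - t₁) ^ p) :
    m = 1 ∧ p = 2 ∧
    Tendsto (fun t => (t - t₁) * x t) (nhdsWithin t₁ {t₁}ᶜ) (nhds 1) ∧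
    Tendsto (fun t => (t - t₁) ^ 2 * z t) (nhdsWithin t₁ {t₁}ᶜ) (nhds (-1)) ∧
    Y t₁ = δ / 2 := by
  have hball : Metric.ball t₁ r ∈ nhds t₁ := Metric.ball_mem_nhds _ hr
  set U : Set ℂ := Metric.ball t₁ r \ {t₁} with hUdef
  have hUopen : IsOpen U := Metric.isOpen_ball.sdiff isClosed_singleton
  have hUmem : U ∈ nhdsWithin t₁ {t₁}ᶜ := by
    rw [hUdef, Set.diff_eq]
    exact Filter.inter_mem (mem_nhdsWithin_of_mem_nhds hball) self_mem_nhdsWithin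
  have ht₁ : t₁ ∈ Metric.ball t₁ r := Metric.mem_ball_self hr
  have hXa := hX.analyticOnNhd Metric.isOpen_ball
  have hYa := hY.analyticOnNhd Metric.isOpen_ball
  have hZa := hZ.analyticOnNhd Metric.isOpen_ball
  have hXc : ContinuousAt X t₁ := (hXa t₁ ht₁).continuousAt
  have hYc : ContinuousAt Y t₁ := (hYa t₁ ht₁).continuousAt
  have hZc : ContinuousAt Z t₁ := (hZa t₁ ht₁).continuousAt
  have hX'c : ContinuousAt (deriv X) t₁ := ((hXa.deriv) t₁ ht₁).continuousAt
  have hY'c : ContinuousAt (deriv Y) t₁ := ((hYa.deriv) t₁ ht₁).continuousAt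
  have hZ'c : ContinuousAt (deriv Z) t₁ := ((hZa.deriv) t₁ ht₁).continuousAt
  -- generic evaluation lemma
  have key : ∀ K : ℂ → ℂ, ContinuousAt K t₁ → (∀ t ∈ U, K t = 0) → K t₁ = 0 := by
    intro K hc h0
    have h1 : Tendsto K (nhdsWithin t₁ {t₁}ᶜ) (nhds (K t₁)) :=
      hc.tendsto.mono_left nhdsWithin_le_nhds
    have h2 : Tendsto K (nhdsWithin t₁ {t₁}ᶜ) (nhds 0) := by
      refine Tendsto.congr' ?_ tendsto_const_nhds
      filter_upwards [hUmem] with t ht using (h0 t ht).symm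
    exact tendsto_nhds_unique h1 h2
  obtain ⟨m₀, rfl⟩ : ∃ m₀, m = m₀ + 1 := ⟨m - 1, (Nat.succ_pred_eq_of_pos hm).symm⟩
  obtain ⟨p₀, rfl⟩ : ∃ p₀, p = p₀ + 1 := ⟨p - 1, (Nat.succ_pred_eq_of_pos hp).symm⟩
  -- helper facts for points in U
  have hUfacts : ∀ t ∈ U, t ∈ Metric.ball t₁ r ∧ t - t₁ ≠ 0 := by
    intro t ht
    exact ⟨ht.1, sub_ne_zero.2 (by simpa using ht.2)⟩
  have hXd : ∀ t ∈ U, HasDerivAt X (deriv X t) t := fun t ht =>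
    (hX.differentiableAt (Metric.isOpen_ball.mem_nhds (hUfacts t ht).1)).hasDerivAt
  have hYd : ∀ t ∈ U, HasDerivAt Y (deriv Y t) t := fun t ht =>
    (hY.differentiableAt (Metric.isOpen_ball.mem_nhds (hUfacts t ht).1)).hasDerivAt
  have hZd : ∀ t ∈ U, HasDerivAt Z (deriv Z t) t := fun t ht =>
    (hZ.differentiableAt (Metric.isOpen_ball.mem_nhds (hUfacts t ht).1)).hasDerivAt
  have hpow : ∀ (n : ℕ) (t : ℂ), HasDerivAt (fun u => (u - t₁) ^ (n + 1))
      ((n + 1 : ℂ) * (t - t₁) ^ n) t := by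
    intro n t
    have := ((hasDerivAt_id t).sub_const t₁).pow (n + 1)
    simpa [Pi.pow_def] using this
  -- the z-equation identity
  have hEz : ∀ t ∈ U, deriv Z t * (t - t₁) ^ (m₀ + 1) -
      (p₀ + 1 : ℂ) * Z t * (t - t₁) ^ m₀ + 2 * X t * Z t + 2 * Z t * (t - t₁) ^ (m₀ + 1) = 0 := by
    intro t ht
    have hs := (hUfacts t ht).2
    have hdiv := (hZd t ht).div (hpow p₀ t) (pow_ne_zero _ hs)
    have hzd : HasDerivAt z ((deriv Z t * (t - t₁) ^ (p₀ + 1) -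
        Z t * ((p₀ + 1 : ℂ) * (t - t₁) ^ p₀)) / ((t - t₁) ^ (p₀ + 1)) ^ 2) t :=
      hdiv.congr_of_eventuallyEq (Filter.eventually_of_mem (hUopen.mem_nhds ht) hzZ)
    have heq := hzd.unique (hsol t ht).2.2
    rw [hxX t ht, hzZ t ht] at heq
    have h2 : (deriv Z t * (t - t₁) ^ (m₀ + 1) -
        (p₀ + 1 : ℂ) * Z t * (t - t₁) ^ m₀ + 2 * X t * Z t + 2 * Z t * (t - t₁) ^ (m₀ + 1)) *
        (t - t₁) ^ (3 * p₀ + 3) = 0 := by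
      set s : ℂ := t - t₁ with hsdef
      clear_value s
      field_simp at heq
      linear_combination s ^ (2 * p₀ + 2) * heq
    exact (mul_eq_zero.1 h2).resolve_right (pow_ne_zero _ hs)
  -- evaluate K_z at t₁
  have hKz0 := key _ (by fun_prop) hEz
  simp only [sub_self] at hKz0
  rw [zero_pow (Nat.succ_ne_zero m₀)] at hKz0
  -- m₀ = 0
  have hm₀ : m₀ = 0 := by
    by_contra h
    rw [zero_pow h] at hKz0
    simp at hKz0
    rcases hKz0 with h1 | h2
    · exact hX0 h1
    · exact hZ0 h2
  subst hm₀
  rw [pow_zero] at hKz0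
  -- X t₁ = (p₀ + 1)/2
  have hXval : 2 * X t₁ = (p₀ + 1 : ℂ) := by
    have h2 : ((p₀:ℂ) + 1) * Z t₁ = 2 * X t₁ * Z t₁ := by linear_combination -hKz0
    have h3 := mul_right_cancel₀ hZ0 h2
    linear_combination -h3
  -- x-equation identity
  have hEx : ∀ t ∈ U, (-2 * (Y t) ^ 2 + δ * Y t) * (t - t₁) ^ (p₀ + 2) +
      γ * X t * (t - t₁) ^ (p₀ + 1) + Z t * (t - t₁) - deriv X t * (t - t₁) ^ (p₀ + 1) +
      X t * (t - t₁) ^ p₀ = 0 := by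
    intro t ht
    have hs := (hUfacts t ht).2
    have hdiv := (hXd t ht).div (hpow 0 t) (pow_ne_zero _ hs)
    have hxd := hdiv.congr_of_eventuallyEq
      (Filter.eventually_of_mem (hUopen.mem_nhds ht) hxX)
    have heq := hxd.unique (hsol t ht).1
    rw [hxX t ht, hyY t ht, hzZ t ht] at heq
    have h2 : ((-2 * (Y t) ^ 2 + δ * Y t) * (t - t₁) ^ (p₀ + 2) +
        γ * X t * (t - t₁) ^ (p₀ + 1) + Z t * (t - t₁) - deriv X t * (t - t₁) ^ (p₀ + 1) +
        X t * (t - t₁) ^ p₀) * (t - t₁) ^ 2 = 0 := by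
      set s : ℂ := t - t₁ with hsdef
      clear_value s
      field_simp at heq
      linear_combination (-s) * heq
    exact (mul_eq_zero.1 h2).resolve_right (pow_ne_zero _ hs)
  -- evaluate K_x at t₁
  have hKx0 := key _ (by fun_prop) hEx
  simp only [sub_self] at hKx0
  rw [zero_pow (by omega : p₀ + 2 ≠ 0), zero_pow (by omega : p₀ + 1 ≠ 0)] at hKx0
  have hp₀ : p₀ ≠ 0 := by
    intro h
    subst h
    rw [pow_zero] at hKx0
    exact hX0 (by linear_combination hKx0)
  obtain ⟨p₁, rfl⟩ : ∃ p₁, p₀ = p₁ + 1 :=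
    ⟨p₀ - 1, (Nat.succ_pred_eq_of_pos (Nat.pos_of_ne_zero hp₀)).symm⟩
  -- divide K_x by (t - t₁)
  have hEx2 : ∀ t ∈ U, (-2 * (Y t) ^ 2 + δ * Y t) * (t - t₁) ^ (p₁ + 2) +
      γ * X t * (t - t₁) ^ (p₁ + 1) + Z t - deriv X t * (t - t₁) ^ (p₁ + 1) +
      X t * (t - t₁) ^ p₁ = 0 := by
    intro t ht
    have hs := (hUfacts t ht).2
    have h1 := hEx t ht
    have h2 : ((-2 * (Y t) ^ 2 + δ * Y t) * (t - t₁) ^ (p₁ + 2) +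
        γ * X t * (t - t₁) ^ (p₁ + 1) + Z t - deriv X t * (t - t₁) ^ (p₁ + 1) +
        X t * (t - t₁) ^ p₁) * (t - t₁) = 0 := by
      set s : ℂ := t - t₁ with hsdef
      clear_value s
      linear_combination h1
    exact (mul_eq_zero.1 h2).resolve_right hs
  have hKx20 := key _ (by fun_prop) hEx2
  simp only [sub_self] at hKx20
  rw [zero_pow (by omega : p₁ + 2 ≠ 0), zero_pow (by omega : p₁ + 1 ≠ 0)] at hKx20
  have hp₁ : p₁ = 0 := by
    by_contra h
    rw [zero_pow h] at hKx20
    exact hZ0 (by linear_combination hKx20)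
  subst hp₁
  rw [pow_zero] at hKx20
  have hX1 : X t₁ = 1 := by
    push_cast at hXval
    linear_combination hXval / 2
  have hZ1 : Z t₁ = -1 := by linear_combination hKx20 - hX1
  -- y-equation
  have hEy : ∀ t ∈ U, deriv Y t * (t - t₁) - 2 * X t * Y t + δ * X t - γ * Y t * (t - t₁) = 0 := by
    intro t ht
    have hs := (hUfacts t ht).2
    have hyd := (hYd t ht).congr_of_eventuallyEq
      (Filter.eventually_of_mem (hUopen.mem_nhds ht) hyY)
    have heq := hyd.unique (hsol t ht).2.1
    rw [hxX t ht, hyY t ht] at heq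
    set s : ℂ := t - t₁ with hsdef
    clear_value s
    field_simp at heq
    linear_combination heq
  have hKy0 := key _ (by fun_prop) hEy
  simp only [sub_self] at hKy0
  rw [hX1] at hKy0
  have hY1 : Y t₁ = δ / 2 := by
    field_simp
    linear_combination -hKy0
  refine ⟨rfl, rfl, ?_, ?_, hY1⟩
  · have hXt : Tendsto X (nhdsWithin t₁ {t₁}ᶜ) (nhds 1) := by
      have h : Tendsto X (nhdsWithin t₁ {t₁}ᶜ) (nhds (X t₁)) :=
        hXc.tendsto.mono_left nhdsWithin_le_nhds
      rwa [hX1] at h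
    refine hXt.congr' ?_
    filter_upwards [hUmem] with t ht
    rw [hxX t ht]
    field_simp [(hUfacts t ht).2]
    ring
  · have hZt : Tendsto Z (nhdsWithin t₁ {t₁}ᶜ) (nhds (-1)) := by
      have h : Tendsto Z (nhdsWithin t₁ {t₁}ᶜ) (nhds (Z t₁)) :=
        hZc.tendsto.mono_left nhdsWithin_le_nhds
      rwa [hZ1] at h
    refine hZt.congr' ?_
    filter_upwards [hUmem] with t ht
    rw [hzZ t ht]
    field_simp [(hUfacts t ht).2]
end
end

section
/- Let δ, γ ∈ ℂ. There exist polynomials g₁, g₂, g₃ ∈ ℂ[u, v, w] (depending only on δ and γ) such that for every solution (x, y, z) of the reduced three-wave interaction system (1) on a connected open set U ⊆ ℂ with x(t) ≠ 0 for all t ∈ U, the functions u = 1/x, v = ((y − δ/2)x + δγ/2)x, w = z + x² + 2(γ+1)x satisfy, for all t ∈ U: du/dt = g₁(u, v, w), u·dv/dt = δγ + u·g₂(u, v, w), and u·dw/dt = −2γ(γ+1) + u·g₃(u, v, w). -/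
open Complex

noncomputable section

set_option maxHeartbeats 2000000 in
theorem stmt3 (δ γ : ℂ) :
    ∃ g₁ g₂ g₃ : MvPolynomial (Fin 3) ℂ,
      ∀ (U : Set ℂ), IsOpen U → IsConnected U →
      ∀ x y z : ℂ → ℂ, solTWI δ γ x y z U → (∀ t ∈ U, x t ≠ 0) →
      ∀ t ∈ U,
        HasDerivAt (fun s => 1 / x s)
          (MvPolynomial.eval
            ![1 / x t, ((y t - δ / 2) * x t + δ * γ / 2) * x t,
              z t + (x t) ^ 2 + 2 * (γ + 1) * x t] g₁) t ∧
        (∃ d, HasDerivAt (fun s => ((y s - δ / 2) * x s + δ * γ / 2) * x s) d t ∧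
          (1 / x t) * d =
            δ * γ + (1 / x t) *
              MvPolynomial.eval
                ![1 / x t, ((y t - δ / 2) * x t + δ * γ / 2) * x t,
                  z t + (x t) ^ 2 + 2 * (γ + 1) * x t] g₂) ∧
        (∃ d, HasDerivAt (fun s => z s + (x s) ^ 2 + 2 * (γ + 1) * x s) d t ∧
          (1 / x t) * d =
            -2 * γ * (γ + 1) + (1 / x t) *
              MvPolynomial.eval
                ![1 / x t, ((y t - δ / 2) * x t + δ * γ / 2) * x t,
                  z t + (x t) ^ 2 + 2 * (γ + 1) * x t] g₃) := by
  classical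
  open MvPolynomial in
  refine ⟨
    C 1 + C 2 * X 0 + C γ * X 0 - X 0 ^ 2 * X 2 - C (δ ^ 2 * γ / 2) * X 0 ^ 3
      + C (δ ^ 2 * γ ^ 2 / 2) * X 0 ^ 4 + C δ * X 0 ^ 4 * X 1
      - C (2 * δ * γ) * X 0 ^ 5 * X 1 + C 2 * X 0 ^ 6 * X 1 ^ 2,
    - C (δ * γ / 2) * X 2 - C 4 * X 1 - C γ * X 1 - C (δ ^ 3 * γ ^ 2 / 4) * X 0
      + C 2 * X 0 * X 1 * X 2 + C (δ ^ 3 * γ ^ 3 / 4) * X 0 ^ 2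
      + C (3 * δ ^ 2 * γ / 2) * X 0 ^ 2 * X 1 - C (2 * δ ^ 2 * γ ^ 2) * X 0 ^ 3 * X 1
      - C (2 * δ) * X 0 ^ 3 * X 1 ^ 2 + C (5 * δ * γ) * X 0 ^ 4 * X 1 ^ 2
      - C 4 * X 0 ^ 5 * X 1 ^ 3,
    C (δ ^ 2 * γ) + C (2 * γ) * X 2 + C (δ ^ 2 * γ) * X 0 - C (2 * δ) * X 0 * X 1
      - C (δ ^ 2 * γ ^ 2) * X 0 ^ 2 - C (δ ^ 2 * γ ^ 3) * X 0 ^ 2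
      - C (2 * δ) * X 0 ^ 2 * X 1 + C (2 * δ * γ) * X 0 ^ 2 * X 1
      + C (4 * δ * γ) * X 0 ^ 3 * X 1 + C (4 * δ * γ ^ 2) * X 0 ^ 3 * X 1
      - C 4 * X 0 ^ 3 * X 1 ^ 2 - C 4 * X 0 ^ 4 * X 1 ^ 2
      - C (4 * γ) * X 0 ^ 4 * X 1 ^ 2, ?_⟩
  intro U _ _ x y z hsol hx0 t ht
  obtain ⟨hx, hy, hz⟩ := hsol t ht
  have hxt : x t ≠ 0 := hx0 t ht
  have hu : (1 / x t) * x t = 1 := one_div_mul_cancel hxt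
  refine ⟨?_, ⟨_, (((hy.sub_const (δ / 2)).mul hx).add_const (δ * γ / 2)).mul hx, ?_⟩,
    ⟨_, (hz.add (hx.pow 2)).add (hx.const_mul (2 * (γ + 1))), ?_⟩⟩
  · have h1 := (hasDerivAt_const t (1 : ℂ)).div hx hxt
    have e : MvPolynomial.eval
        ![1 / x t, ((y t - δ / 2) * x t + δ * γ / 2) * x t,
          z t + (x t) ^ 2 + 2 * (γ + 1) * x t]
        (MvPolynomial.C 1 + MvPolynomial.C 2 * MvPolynomial.X 0
          + MvPolynomial.C γ * MvPolynomial.X 0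
          - MvPolynomial.X 0 ^ 2 * MvPolynomial.X 2
          - MvPolynomial.C (δ ^ 2 * γ / 2) * MvPolynomial.X 0 ^ 3
          + MvPolynomial.C (δ ^ 2 * γ ^ 2 / 2) * MvPolynomial.X 0 ^ 4
          + MvPolynomial.C δ * MvPolynomial.X 0 ^ 4 * MvPolynomial.X 1
          - MvPolynomial.C (2 * δ * γ) * MvPolynomial.X 0 ^ 5 * MvPolynomial.X 1
          + MvPolynomial.C 2 * MvPolynomial.X 0 ^ 6 * MvPolynomial.X 1 ^ 2) =
        (0 * x t - 1 * (-2 * (y t) ^ 2 + γ * x t + δ * y t + z t)) / x t ^ 2 := by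
      simp only [map_add, map_sub, map_mul, map_pow, MvPolynomial.eval_C,
        MvPolynomial.eval_X, Matrix.cons_val_zero, Matrix.cons_val_one,
        Matrix.head_cons, Matrix.cons_val_two, Matrix.tail_cons]
      rw [eq_div_iff (pow_ne_zero 2 hxt)]
      linear_combination ((-1:ℂ) * z t + (-1:ℂ) * y t * δ + (2:ℂ) * y t^2 + (-1:ℂ) * x t * γ + (-1:ℂ) * x t^2 + (-1:ℂ) * (1/x t) * x t * z t + (-1:ℂ) * (1/x t) * x t * y t * δ + (2:ℂ) * (1/x t) * x t * y t^2 + (-2:ℂ) * (1/x t) * x t^2 + (-2:ℂ) * (1/x t) * x t^2 * γ + (-1:ℂ) * (1/x t) * x t^3 + (-1:ℂ) * (1/x t)^2 * x t^2 * y t * δ + (2:ℂ) * (1/x t)^2 * x t^2 * y t^2 + ((1:ℂ)/2) * (1/x t)^3 * x t^2 * δ^2 * γ + (-1:ℂ) * (1/x t)^3 * x t^3 * y t * δ + (2:ℂ) * (1/x t)^3 * x t^3 * y t^2 + ((-1:ℂ)/2) * (1/x t)^4 * x t^2 * δ^2 * γ^2 + ((1:ℂ)/2) * (1/x t)^4 *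 x t^4 * δ^2 + (-2:ℂ) * (1/x t)^4 * x t^4 * y t * δ + (2:ℂ) * (1/x t)^4 * x t^4 * y t^2 + ((1:ℂ)/2) * (1/x t)^5 * x t^3 * δ^2 * γ^2 + (-1:ℂ) * (1/x t)^5 * x t^4 * δ^2 * γ + (2:ℂ) * (1/x t)^5 * x t^4 * y t * δ * γ + ((1:ℂ)/2) * (1/x t)^5 * x t^5 * δ^2 + (-2:ℂ) * (1/x t)^5 * x t^5 * y t * δ + (2:ℂ) * (1/x t)^5 * x t^5 * y t^2) * hu
    rw [e]; exact h1
  · simp only [map_add, map_sub, map_mul, map_pow, map_neg, MvPolynomial.eval_C,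
      MvPolynomial.eval_X, Matrix.cons_val_zero, Matrix.cons_val_one,
      Matrix.head_cons, Matrix.cons_val_two, Matrix.tail_cons, Pi.mul_apply]
    linear_combination ((1:ℂ) * δ * γ + (-1:ℂ) * (1/x t) * z t * δ * γ + ((-1:ℂ)/2) * (1/x t) * y t * δ^2 * γ + (1:ℂ) * (1/x t) * y t^2 * δ * γ + (-2:ℂ) * (1/x t) * x t * δ * γ + (-2:ℂ) * (1/x t) * x t * δ * γ^2 + (1:ℂ) * (1/x t) * x t * z t * δ + (1:ℂ) * (1/x t) * x t * y t * δ^2 + (-2:ℂ) * (1/x t) * x t * y t * z t + (-4:ℂ) * (1/x t) * x t * y t^2 * δ + (4:ℂ) * (1/x t) * x t * y t^3 + (2:ℂ) * (1/x t) * x t^2 * δ + (1:ℂ) * (1/x t) * x t^2 * δ * γ + (-4:ℂ) * (1/x t) * x t^2 * y t + (-4:ℂ) * (1/x t) * x t^2 * y t * γ + (1:ℂ) * (1/x t) * x t^3 * δ + (-2:ℂ) * (1/x t) * x t^3 * y t + ((-1:ℂ)/4) * (1/x t)^2 * δ^3 * γ^2 + ((-1:ℂ)/2) * (1/x t)^2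 * x t * y t * δ^2 * γ + (1:ℂ) * (1/x t)^2 * x t * y t^2 * δ * γ + (1:ℂ) * (1/x t)^2 * x t^2 * y t * δ^2 + (-4:ℂ) * (1/x t)^2 * x t^2 * y t^2 * δ + (4:ℂ) * (1/x t)^2 * x t^2 * y t^3 + ((1:ℂ)/4) * (1/x t)^3 * δ^3 * γ^3 + ((1:ℂ)/2) * (1/x t)^3 * x t * δ^3 * γ^2 + ((-3:ℂ)/4) * (1/x t)^3 * x t^2 * δ^3 * γ + (1:ℂ) * (1/x t)^3 * x t^2 * y t * δ^2 * γ + (1:ℂ) * (1/x t)^3 * x t^2 * y t^2 * δ * γ + (1:ℂ) * (1/x t)^3 * x t^3 * y t * δ^2 + (-4:ℂ) * (1/x t)^3 * x t^3 * y t^2 * δ + (4:ℂ) * (1/x t)^3 * x t^3 * y t^3 + ((-3:ℂ)/4) * (1/x t)^4 * x t * δ^3 * γ^3 + (1:ℂ) * (1/x t)^4 * x t^2 * δ^3 * γ^2 + (-2:ℂ) * (1/x t)^4 * x t^2 * y t * δ^2 * γ^2 + ((1:ℂ)/4) * (1/x t)^4 * x t^3 * δ^3 * γ + (-1:ℂ)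 * (1/x t)^4 * x t^3 * y t * δ^2 * γ + (1:ℂ) * (1/x t)^4 * x t^3 * y t^2 * δ * γ + ((-1:ℂ)/2) * (1/x t)^4 * x t^4 * δ^3 + (3:ℂ) * (1/x t)^4 * x t^4 * y t * δ^2 + (-6:ℂ) * (1/x t)^4 * x t^4 * y t^2 * δ + (4:ℂ) * (1/x t)^4 * x t^4 * y t^3 + ((1:ℂ)/2) * (1/x t)^5 * x t^2 * δ^3 * γ^3 + ((-3:ℂ)/2) * (1/x t)^5 * x t^3 * δ^3 * γ^2 + (3:ℂ) * (1/x t)^5 * x t^3 * y t * δ^2 * γ^2 + ((3:ℂ)/2) * (1/x t)^5 * x t^4 * δ^3 * γ + (-6:ℂ) * (1/x t)^5 * x t^4 * y t * δ^2 * γ + (6:ℂ) * (1/x t)^5 * x t^4 * y t^2 * δ * γ + ((-1:ℂ)/2) * (1/x t)^5 * x t^5 * δ^3 + (3:ℂ) * (1/x t)^5 * x t^5 * y t * δ^2 + (-6:ℂ) * (1/x t)^5 * x t^5 * y t^2 * δ + (4:ℂ) * (1/x t)^5 * x t^5 * y t^3) * hu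
  · simp only [map_add, map_sub, map_mul, map_pow, map_neg, MvPolynomial.eval_C,
      MvPolynomial.eval_X, Matrix.cons_val_zero, Matrix.cons_val_one,
      Matrix.head_cons, Matrix.cons_val_two, Matrix.tail_cons]
    linear_combination ((-2:ℂ) * γ + (-2:ℂ) * γ^2 + (1:ℂ) * (1/x t) * δ^2 * γ + (-2:ℂ) * (1/x t) * y t * δ + (-2:ℂ) * (1/x t) * y t * δ * γ + (4:ℂ) * (1/x t) * y t^2 + (4:ℂ) * (1/x t) * y t^2 * γ + (-2:ℂ) * (1/x t) * x t * y t * δ + (4:ℂ) * (1/x t) * x t * y t^2 + (1:ℂ) * (1/x t)^2 * δ^2 * γ + (-2:ℂ) * (1/x t)^2 * x t * y t * δ + (-2:ℂ) * (1/x t)^2 * x t * y t * δ * γ + (4:ℂ) * (1/x t)^2 * x t * y t^2 + (4:ℂ) * (1/x t)^2 * x t * y t^2 * γ + (1:ℂ) * (1/x t)^2 * x t^2 * δ^2 + (-4:ℂ) * (1/x t)^2 * x t^2 * y t * δ + (4:ℂ) * (1/x t)^2 * x t^2 * y t^2 + (-1:ℂ) * (1/x t)^3 * δ^2 * γ^2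 + (-1:ℂ) * (1/x t)^3 * δ^2 * γ^3 + (1:ℂ) * (1/x t)^3 * x t * δ^2 * γ^2 + (1:ℂ) * (1/x t)^3 * x t^2 * δ^2 + (-1:ℂ) * (1/x t)^3 * x t^2 * δ^2 * γ + (-4:ℂ) * (1/x t)^3 * x t^2 * y t * δ + (4:ℂ) * (1/x t)^3 * x t^2 * y t^2 + (4:ℂ) * (1/x t)^3 * x t^2 * y t^2 * γ + (1:ℂ) * (1/x t)^3 * x t^3 * δ^2 + (-4:ℂ) * (1/x t)^3 * x t^3 * y t * δ + (4:ℂ) * (1/x t)^3 * x t^3 * y t^2 + (1:ℂ) * (1/x t)^4 * x t * δ^2 * γ^2 + (1:ℂ) * (1/x t)^4 * x t * δ^2 * γ^3 + (-2:ℂ) * (1/x t)^4 * x t^2 * δ^2 * γ + (-2:ℂ) * (1/x t)^4 * x t^2 * δ^2 * γ^2 + (4:ℂ) * (1/x t)^4 * x t^2 * y t * δ * γ + (4:ℂ) * (1/x t)^4 * x t^2 * y t * δ * γ^2 + (1:ℂ) * (1/x t)^4 * x t^3 * δ^2 + (1:ℂ) * (1/x t)^4 * x t^3 * δ^2 * γ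 + (-4:ℂ) * (1/x t)^4 * x t^3 * y t * δ + (-4:ℂ) * (1/x t)^4 * x t^3 * y t * δ * γ + (4:ℂ) * (1/x t)^4 * x t^3 * y t^2 + (4:ℂ) * (1/x t)^4 * x t^3 * y t^2 * γ) * hu
end
end

section
/- Let δ, γ ∈ ℂ. The following are equivalent: (i) there exist polynomials g₂, g₃ ∈ ℂ[u, v, w] such that for every solution (x, y, z) of the reduced three-wave interaction system (1) on any connected open set U ⊆ ℂ with x nonvanishing, the functions u = 1/x, v = ((y − δ/2)x + δγ/2)x, w = z + x² + 2(γ+1)x satisfy dv/dt = g₂(u, v, w) and dw/dt = g₃(u, v, w) on U; (ii) δγ = 0 and γ(γ+1) = 0; (iii) γ = 0, or (δ, γ) = (0, −1). -/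
open Complex

noncomputable section

open Polynomial Filter Metric Topology

/-- Formal antiderivative of a polynomial. -/
def pint (p : Polynomial ℂ) : Polynomial ℂ :=
  p.sum fun n a => C (a / (n + 1)) * X ^ (n + 1)

lemma pint_eval_zero (p : Polynomial ℂ) : (pint p).eval 0 = 0 := by
  rw [pint, Polynomial.sum, Polynomial.eval_finset_sum]
  simp

lemma derivative_pint (p : Polynomial ℂ) : (pint p).derivative = p := by
  conv_rhs => rw [← Polynomial.sum_C_mul_X_pow_eq p]
  rw [pint, Polynomial.sum, Polynomial.sum, map_sum]
  refine Finset.sum_congr rfl fun n hn => ?_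
  have h : ((n : ℂ) + 1) ≠ 0 := Nat.cast_add_one_ne_zero n
  rw [Polynomial.derivative_C_mul_X_pow]
  push_cast
  rw [div_mul_cancel₀ _ h]

lemma pint_hasDerivAt (p : Polynomial ℂ) (t : ℂ) :
    HasDerivAt (fun s => (pint p).eval s) (p.eval t) t := by
  have := (pint p).hasDerivAt t
  rwa [derivative_pint] at this

lemma pint_eval (p : Polynomial ℂ) (t : ℂ) :
    (pint p).eval t = t * ∫ s in (0:ℝ)..1, p.eval (s * t) := by
  have hint : ∀ n ∈ p.support, IntervalIntegrable
      (fun s : ℝ => p.coeff n * ((s : ℂ) * t) ^ n) MeasureTheory.volume 0 1 := by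
    intro n _
    exact Continuous.intervalIntegrable (continuous_const.mul ((Complex.continuous_ofReal.mul continuous_const).pow n)) _ _
  calc (pint p).eval t = ∑ n ∈ p.support, p.coeff n / (n+1) * t ^ (n+1) := by
        rw [pint, Polynomial.sum, Polynomial.eval_finset_sum]
        simp
    _ = t * ∑ n ∈ p.support, ∫ s in (0:ℝ)..1, p.coeff n * ((s:ℂ) * t) ^ n := by
        rw [Finset.mul_sum]
        refine Finset.sum_congr rfl fun n _ => ?_
        have : (fun s : ℝ => p.coeff n * ((s:ℂ) * t) ^ n)
            = fun s : ℝ => (p.coeff n * t ^ n) * ((s:ℝ)^n : ℝ) := by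
          funext s; push_cast; ring
        rw [this, intervalIntegral.integral_const_mul]
        rw [intervalIntegral.integral_ofReal, integral_pow]
        have hn : ((n : ℂ) + 1) ≠ 0 := Nat.cast_add_one_ne_zero n
        push_cast
        field_simp
        ring
    _ = t * ∫ s in (0:ℝ)..1, p.eval ((s:ℂ) * t) := by
        rw [← intervalIntegral.integral_finset_sum hint]
        congr 1
        refine intervalIntegral.integral_congr fun s _ => ?_
        rw [Polynomial.eval_eq_sum, Polynomial.sum]

lemma pint_eval_bound (p : Polynomial ℂ) (t : ℂ) (M : ℝ)
    (h : ∀ s : ℝ, s ∈ Set.Icc (0:ℝ) 1 → ‖p.eval (s * t)‖ ≤ M) :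
    ‖(pint p).eval t‖ ≤ ‖t‖ * M := by
  rw [pint_eval, norm_mul]
  refine mul_le_mul_of_nonneg_left ?_ (norm_nonneg t)
  have := intervalIntegral.norm_integral_le_of_norm_le_const (C := M)
      (f := fun s : ℝ => p.eval ((s:ℂ) * t)) (a := 0) (b := 1) ?_
  · simpa using this
  · intro s hs
    refine h s ?_
    rw [Set.uIoc_of_le (by norm_num)] at hs
    exact ⟨le_of_lt hs.1, hs.2⟩

lemma pint_sub (a b : Polynomial ℂ) : pint (a - b) = pint a - pint b := by
  have h := Polynomial.sum_add_index (a - b) b (fun n a => C (a / (n + 1)) * X ^ (n + 1))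
    (by intro i; simp) (by intro i x y; rw [add_div, map_add, add_mul])
  rw [sub_add_cancel] at h
  unfold pint; rw [h]; abel

lemma pint_eval_sub_bound (a b : Polynomial ℂ) (t : ℂ) (M : ℝ)
    (h : ∀ s : ℝ, s ∈ Set.Icc (0:ℝ) 1 → ‖a.eval (s * t) - b.eval (s * t)‖ ≤ M) :
    ‖(pint a).eval t - (pint b).eval t‖ ≤ ‖t‖ * M := by
  have : (pint a).eval t - (pint b).eval t = (pint (a - b)).eval t := by
    rw [pint_sub, Polynomial.eval_sub]
  rw [this]
  exact pint_eval_bound _ _ _ (by intro s hs; rw [Polynomial.eval_sub]; exact h s hs)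

section Exist

variable (δ γ X Y Z : ℂ)

/-- one Picard step on a triple of polynomials -/
def pstep (P : Polynomial ℂ × Polynomial ℂ × Polynomial ℂ) :
    Polynomial ℂ × Polynomial ℂ × Polynomial ℂ :=
  (C X + pint (-2 * P.2.1 ^ 2 + C γ * P.1 + C δ * P.2.1 + P.2.2),
   C Y + pint (2 * P.1 * P.2.1 - C δ * P.1 + C γ * P.2.1),
   C Z + pint (-2 * P.1 * P.2.2 - 2 * P.2.2))

def pit : ℕ → Polynomial ℂ × Polynomial ℂ × Polynomial ℂ
  | 0 => (C X, C Y, C Z)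
  | n + 1 => pstep δ γ X Y Z (pit n)

/-- the three components of the vector field -/
def f1 (a b c : ℂ) : ℂ := -2 * b ^ 2 + γ * a + δ * b + c
def f2 (a b c : ℂ) : ℂ := 2 * a * b - δ * a + γ * b
def f3 (a b c : ℂ) : ℂ := -2 * a * c - 2 * c

def BB : ℝ := max (max ‖X‖ ‖Y‖) ‖Z‖ + 1
def LL : ℝ := 4 * BB X Y Z + ‖δ‖ + ‖γ‖ + 2
def MM : ℝ := 2 * (BB X Y Z) ^ 2 + (‖δ‖ + ‖γ‖ + 2) * BB X Y Z
def rr : ℝ := 1 / (2 * (MM δ γ X Y Z + LL δ γ X Y Z + 1))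

lemma BB_pos : 0 < BB X Y Z := by
  have : (0:ℝ) ≤ max (max ‖X‖ ‖Y‖) ‖Z‖ := le_trans (norm_nonneg Z) (le_max_right _ _)
  unfold BB; linarith

lemma LL_pos : 0 < LL δ γ X Y Z := by
  have := BB_pos X Y Z
  have h1 : (0:ℝ) ≤ ‖δ‖ := norm_nonneg _
  have h2 : (0:ℝ) ≤ ‖γ‖ := norm_nonneg _
  unfold LL; linarith

lemma MM_nonneg : 0 ≤ MM δ γ X Y Z := by
  have := BB_pos X Y Z
  have h1 : (0:ℝ) ≤ ‖δ‖ := norm_nonneg _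
  have h2 : (0:ℝ) ≤ ‖γ‖ := norm_nonneg _
  unfold MM; nlinarith

lemma rr_pos : 0 < rr δ γ X Y Z := by
  have h1 := MM_nonneg δ γ X Y Z
  have h2 := LL_pos δ γ X Y Z
  unfold rr; positivity

lemma rr_MM : rr δ γ X Y Z * MM δ γ X Y Z ≤ 1 / 2 := by
  have h1 := MM_nonneg δ γ X Y Z
  have h2 := LL_pos δ γ X Y Z
  rw [rr, div_mul_eq_mul_div, one_mul, div_le_div_iff₀ (by linarith) (by norm_num)]
  nlinarith

lemma rr_LL : rr δ γ X Y Z * LL δ γ X Y Z ≤ 1 / 2 := by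
  have h1 := MM_nonneg δ γ X Y Z
  have h2 := LL_pos δ γ X Y Z
  rw [rr, div_mul_eq_mul_div, one_mul, div_le_div_iff₀ (by linarith) (by norm_num)]
  nlinarith

lemma cnorm2 : ‖(2:ℂ)‖ = 2 := by
  simp

/-- bound of the vector field on the box of radius B -/
lemma f_bound (a b c : ℂ) (ha : ‖a‖ ≤ BB X Y Z) (hb : ‖b‖ ≤ BB X Y Z)
    (hc : ‖c‖ ≤ BB X Y Z) :
    ‖f1 δ γ a b c‖ ≤ MM δ γ X Y Z ∧ ‖f2 δ γ a b c‖ ≤ MM δ γ X Y Z ∧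
      ‖f3 a b c‖ ≤ MM δ γ X Y Z := by
  have hB := BB_pos X Y Z
  have h1 : (0:ℝ) ≤ ‖δ‖ := norm_nonneg δ
  have h2 : (0:ℝ) ≤ ‖γ‖ := norm_nonneg γ
  have ha0 := norm_nonneg a
  have hb0 := norm_nonneg b
  have hc0 := norm_nonneg c
  refine ⟨?_, ?_, ?_⟩
  · have T1 := norm_add_le (-2 * b ^ 2 + γ * a + δ * b) c
    have T2 := norm_add_le (-2 * b ^ 2 + γ * a) (δ * b)
    have T3 := norm_add_le (-2 * b ^ 2) (γ * a)
    unfold f1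
    simp only [norm_mul, norm_neg, norm_pow, cnorm2] at T1 T2 T3 ⊢
    unfold MM
    nlinarith
  · have T1 := norm_sub_le (2 * a * b) (δ * a)
    have T2 := norm_add_le (2 * a * b - δ * a) (γ * b)
    unfold f2
    simp only [norm_mul, norm_neg, norm_pow, cnorm2] at T1 T2 ⊢
    unfold MM
    nlinarith
  · have T1 := norm_sub_le (-2 * a * c) (2 * c)
    unfold f3
    simp only [norm_mul, norm_neg, norm_pow, cnorm2] at T1 ⊢
    unfold MM
    nlinarith

/-- Lipschitz estimates for the vector field on the box of radius B -/
lemma f_lip (a b c a' b' c' : ℂ) (m : ℝ)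
    (ha : ‖a‖ ≤ BB X Y Z) (hb : ‖b‖ ≤ BB X Y Z) (hc : ‖c‖ ≤ BB X Y Z)
    (ha' : ‖a'‖ ≤ BB X Y Z) (hb' : ‖b'‖ ≤ BB X Y Z) (hc' : ‖c'‖ ≤ BB X Y Z)
    (da : ‖a - a'‖ ≤ m) (db : ‖b - b'‖ ≤ m) (dc : ‖c - c'‖ ≤ m) :
    ‖f1 δ γ a b c - f1 δ γ a' b' c'‖ ≤ LL δ γ X Y Z * m ∧
    ‖f2 δ γ a b c - f2 δ γ a' b' c'‖ ≤ LL δ γ X Y Z * m ∧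
    ‖f3 a b c - f3 a' b' c'‖ ≤ LL δ γ X Y Z * m := by
  have hB := BB_pos X Y Z
  have h1 : (0:ℝ) ≤ ‖δ‖ := norm_nonneg δ
  have h2 : (0:ℝ) ≤ ‖γ‖ := norm_nonneg γ
  have hm : (0:ℝ) ≤ m := le_trans (norm_nonneg _) da
  have hbb' := norm_add_le b b'
  refine ⟨?_, ?_, ?_⟩
  · have e : f1 δ γ a b c - f1 δ γ a' b' c'
        = -2 * (b + b') * (b - b') + γ * (a - a') + (δ * (b - b') + (c - c')) := by
      unfold f1; ring
    rw [e]
    have T1 := norm_add_le (-2 * (b + b') * (b - b') + γ * (a - a')) (δ * (b - b') + (c - c'))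
    have T2 := norm_add_le (-2 * (b + b') * (b - b')) (γ * (a - a'))
    have T3 := norm_add_le (δ * (b - b')) (c - c')
    simp only [norm_mul, norm_neg, cnorm2] at T1 T2 T3 ⊢
    unfold LL
    nlinarith [norm_nonneg (b-b'), norm_nonneg (a-a'), norm_nonneg (c-c')]
  · have e : f2 δ γ a b c - f2 δ γ a' b' c'
        = 2 * a * (b - b') + 2 * b' * (a - a') + (γ * (b - b') - δ * (a - a')) := by
      unfold f2; ring
    rw [e]
    have T1 := norm_add_le (2 * a * (b - b') + 2 * b' * (a - a')) (γ * (b - b') - δ * (a - a'))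
    have T2 := norm_add_le (2 * a * (b - b')) (2 * b' * (a - a'))
    have T3 := norm_sub_le (γ * (b - b')) (δ * (a - a'))
    simp only [norm_mul, norm_neg, cnorm2] at T1 T2 T3 ⊢
    unfold LL
    nlinarith [norm_nonneg (b-b'), norm_nonneg (a-a'), norm_nonneg (c-c')]
  · have e : f3 a b c - f3 a' b' c'
        = -2 * a * (c - c') + (-2 * c') * (a - a') + -2 * (c - c') := by
      unfold f3; ring
    rw [e]
    have T1 := norm_add_le (-2 * a * (c - c') + (-2 * c') * (a - a')) (-2 * (c - c'))
    have T2 := norm_add_le (-2 * a * (c - c')) ((-2 * c') * (a - a'))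
    simp only [norm_mul, norm_neg, cnorm2] at T1 T2 ⊢
    unfold LL
    nlinarith [norm_nonneg (c-c'), norm_nonneg (a-a')]

/-- integrand polynomials -/
def PP1 (n : ℕ) : Polynomial ℂ :=
  -2 * (pit δ γ X Y Z n).2.1 ^ 2 + C γ * (pit δ γ X Y Z n).1
    + C δ * (pit δ γ X Y Z n).2.1 + (pit δ γ X Y Z n).2.2
def PP2 (n : ℕ) : Polynomial ℂ :=
  2 * (pit δ γ X Y Z n).1 * (pit δ γ X Y Z n).2.1 - C δ * (pit δ γ X Y Z n).1
    + C γ * (pit δ γ X Y Z n).2.1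
def PP3 (n : ℕ) : Polynomial ℂ :=
  -2 * (pit δ γ X Y Z n).1 * (pit δ γ X Y Z n).2.2 - 2 * (pit δ γ X Y Z n).2.2

def pA (n : ℕ) (t : ℂ) : ℂ := ((pit δ γ X Y Z n).1).eval t
def pB (n : ℕ) (t : ℂ) : ℂ := ((pit δ γ X Y Z n).2.1).eval t
def pC (n : ℕ) (t : ℂ) : ℂ := ((pit δ γ X Y Z n).2.2).eval t

lemma pit_succ (n : ℕ) : pit δ γ X Y Z (n+1)
    = (C X + pint (PP1 δ γ X Y Z n), C Y + pint (PP2 δ γ X Y Z n),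
       C Z + pint (PP3 δ γ X Y Z n)) := rfl

lemma PP1_eval (n : ℕ) (s : ℂ) :
    (PP1 δ γ X Y Z n).eval s = f1 δ γ (pA δ γ X Y Z n s) (pB δ γ X Y Z n s) (pC δ γ X Y Z n s) := by
  simp [PP1, f1, pA, pB, pC]

lemma PP2_eval (n : ℕ) (s : ℂ) :
    (PP2 δ γ X Y Z n).eval s = f2 δ γ (pA δ γ X Y Z n s) (pB δ γ X Y Z n s) (pC δ γ X Y Z n s) := by
  simp [PP2, f2, pA, pB, pC]

lemma PP3_eval (n : ℕ) (s : ℂ) :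
    (PP3 δ γ X Y Z n).eval s = f3 (pA δ γ X Y Z n s) (pB δ γ X Y Z n s) (pC δ γ X Y Z n s) := by
  simp [PP3, f3, pA, pB, pC]

lemma pA_succ (n : ℕ) (t : ℂ) :
    pA δ γ X Y Z (n+1) t = X + (pint (PP1 δ γ X Y Z n)).eval t := by
  simp [pA, pit_succ]
lemma pB_succ (n : ℕ) (t : ℂ) :
    pB δ γ X Y Z (n+1) t = Y + (pint (PP2 δ γ X Y Z n)).eval t := by
  simp [pB, pit_succ]
lemma pC_succ (n : ℕ) (t : ℂ) :
    pC δ γ X Y Z (n+1) t = Z + (pint (PP3 δ γ X Y Z n)).eval t := by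
  simp [pC, pit_succ]

lemma norm_smul_le_of_mem (s : ℝ) (t : ℂ) (hs : s ∈ Set.Icc (0:ℝ) 1)
    (ht : ‖t‖ ≤ rr δ γ X Y Z) : ‖(s : ℂ) * t‖ ≤ rr δ γ X Y Z := by
  rw [norm_mul, Complex.norm_real]
  calc |s| * ‖t‖ ≤ 1 * (rr δ γ X Y Z) := by
        apply mul_le_mul (abs_le.2 ⟨by linarith [hs.1], hs.2⟩) ht (norm_nonneg t) zero_le_one
  _ = rr δ γ X Y Z := one_mul _

lemma norm_le_BB_of_close (W v : ℂ) (hW : ‖W‖ ≤ max (max ‖X‖ ‖Y‖) ‖Z‖)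
    (h : ‖v - W‖ ≤ 1) : ‖v‖ ≤ BB X Y Z := by
  have h2 : ‖v‖ ≤ ‖v - W‖ + ‖W‖ := by
    simpa using norm_add_le (v - W) W
  unfold BB; linarith

lemma normB_aux (n : ℕ)
    (h : ∀ t : ℂ, ‖t‖ ≤ rr δ γ X Y Z →
      ‖pA δ γ X Y Z n t - X‖ ≤ 1 ∧ ‖pB δ γ X Y Z n t - Y‖ ≤ 1 ∧ ‖pC δ γ X Y Z n t - Z‖ ≤ 1) :
    (∀ s : ℂ, ‖s‖ ≤ rr δ γ X Y Z → ‖pA δ γ X Y Z n s‖ ≤ BB X Y Z) ∧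
    (∀ s : ℂ, ‖s‖ ≤ rr δ γ X Y Z → ‖pB δ γ X Y Z n s‖ ≤ BB X Y Z) ∧
    (∀ s : ℂ, ‖s‖ ≤ rr δ γ X Y Z → ‖pC δ γ X Y Z n s‖ ≤ BB X Y Z) := by
  refine ⟨fun s hs => ?_, fun s hs => ?_, fun s hs => ?_⟩
  · exact norm_le_BB_of_close X Y Z X _ (le_trans (le_max_left _ _) (le_max_left _ _)) (h s hs).1
  · exact norm_le_BB_of_close X Y Z Y _ (le_trans (le_max_right _ _) (le_max_left _ _)) (h s hs).2.1
  · exact norm_le_BB_of_close X Y Z Z _ (le_max_right _ _) (h s hs).2.2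

/-- the iterates remain in the region of radius 1 around the initial point -/
lemma region : ∀ n : ℕ, ∀ t : ℂ, ‖t‖ ≤ rr δ γ X Y Z →
    ‖pA δ γ X Y Z n t - X‖ ≤ 1 ∧ ‖pB δ γ X Y Z n t - Y‖ ≤ 1 ∧ ‖pC δ γ X Y Z n t - Z‖ ≤ 1 := by
  intro n
  induction n with
  | zero => intro t _; simp [pA, pB, pC, pit]
  | succ n ih =>
    intro t ht
    have key : ∀ q : Polynomial ℂ,
        (∀ s : ℂ, ‖s‖ ≤ rr δ γ X Y Z → ‖q.eval s‖ ≤ MM δ γ X Y Z) →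
        ‖(pint q).eval t‖ ≤ 1 := by
      intro q hq
      have h1 : ‖(pint q).eval t‖ ≤ ‖t‖ * MM δ γ X Y Z :=
        pint_eval_bound _ _ _ (fun s hs => hq _ (norm_smul_le_of_mem δ γ X Y Z s t hs ht))
      calc ‖(pint q).eval t‖ ≤ ‖t‖ * MM δ γ X Y Z := h1
        _ ≤ rr δ γ X Y Z * MM δ γ X Y Z :=
            mul_le_mul_of_nonneg_right ht (MM_nonneg δ γ X Y Z)
        _ ≤ 1/2 := rr_MM δ γ X Y Z
        _ ≤ 1 := by norm_num
    obtain ⟨hA, hB, hC⟩ := normB_aux δ γ X Y Z n ih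
    refine ⟨?_, ?_, ?_⟩
    · rw [pA_succ, add_sub_cancel_left]
      exact key _ (fun s hs => by
        rw [PP1_eval]
        exact (f_bound δ γ X Y Z _ _ _ (hA s hs) (hB s hs) (hC s hs)).1)
    · rw [pB_succ, add_sub_cancel_left]
      exact key _ (fun s hs => by
        rw [PP2_eval]
        exact (f_bound δ γ X Y Z _ _ _ (hA s hs) (hB s hs) (hC s hs)).2.1)
    · rw [pC_succ, add_sub_cancel_left]
      exact key _ (fun s hs => by
        rw [PP3_eval]
        exact (f_bound δ γ X Y Z _ _ _ (hA s hs) (hB s hs) (hC s hs)).2.2)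

lemma region_normB (n : ℕ) :
    (∀ s : ℂ, ‖s‖ ≤ rr δ γ X Y Z → ‖pA δ γ X Y Z n s‖ ≤ BB X Y Z) ∧
    (∀ s : ℂ, ‖s‖ ≤ rr δ γ X Y Z → ‖pB δ γ X Y Z n s‖ ≤ BB X Y Z) ∧
    (∀ s : ℂ, ‖s‖ ≤ rr δ γ X Y Z → ‖pC δ γ X Y Z n s‖ ≤ BB X Y Z) :=
  normB_aux δ γ X Y Z n (region δ γ X Y Z n)

/-- successive differences decay geometrically -/
lemma diff_bound : ∀ n : ℕ, ∀ t : ℂ, ‖t‖ ≤ rr δ γ X Y Z →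
    ‖pA δ γ X Y Z (n+1) t - pA δ γ X Y Z n t‖ ≤ (1/2) ^ n ∧
    ‖pB δ γ X Y Z (n+1) t - pB δ γ X Y Z n t‖ ≤ (1/2) ^ n ∧
    ‖pC δ γ X Y Z (n+1) t - pC δ γ X Y Z n t‖ ≤ (1/2) ^ n := by
  intro n
  induction n with
  | zero =>
    intro t ht
    have key : ∀ q : Polynomial ℂ,
        (∀ s : ℂ, ‖s‖ ≤ rr δ γ X Y Z → ‖q.eval s‖ ≤ MM δ γ X Y Z) →
        ‖(pint q).eval t‖ ≤ (1/2 : ℝ) ^ 0 := by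
      intro q hq
      have h1 : ‖(pint q).eval t‖ ≤ ‖t‖ * MM δ γ X Y Z :=
        pint_eval_bound _ _ _ (fun s hs => hq _ (norm_smul_le_of_mem δ γ X Y Z s t hs ht))
      calc ‖(pint q).eval t‖ ≤ ‖t‖ * MM δ γ X Y Z := h1
        _ ≤ rr δ γ X Y Z * MM δ γ X Y Z :=
            mul_le_mul_of_nonneg_right ht (MM_nonneg δ γ X Y Z)
        _ ≤ 1/2 := rr_MM δ γ X Y Z
        _ ≤ (1/2:ℝ)^0 := by norm_num
    obtain ⟨hA, hB, hC⟩ := region_normB δ γ X Y Z 0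
    have e0 : ∀ t : ℂ, pA δ γ X Y Z 0 t = X ∧ pB δ γ X Y Z 0 t = Y ∧ pC δ γ X Y Z 0 t = Z := by
      intro t; refine ⟨?_, ?_, ?_⟩ <;> simp [pA, pB, pC, pit]
    refine ⟨?_, ?_, ?_⟩
    · rw [(e0 t).1, pA_succ, add_sub_cancel_left]
      exact key _ (fun s hs => by
        rw [PP1_eval]
        exact (f_bound δ γ X Y Z _ _ _ (hA s hs) (hB s hs) (hC s hs)).1)
    · rw [(e0 t).2.1, pB_succ, add_sub_cancel_left]
      exact key _ (fun s hs => by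
        rw [PP2_eval]
        exact (f_bound δ γ X Y Z _ _ _ (hA s hs) (hB s hs) (hC s hs)).2.1)
    · rw [(e0 t).2.2, pC_succ, add_sub_cancel_left]
      exact key _ (fun s hs => by
        rw [PP3_eval]
        exact (f_bound δ γ X Y Z _ _ _ (hA s hs) (hB s hs) (hC s hs)).2.2)
  | succ n ih =>
    intro t ht
    obtain ⟨hA, hB, hC⟩ := region_normB δ γ X Y Z n
    obtain ⟨hA', hB', hC'⟩ := region_normB δ γ X Y Z (n+1)
    have lips : ∀ s : ℂ, ‖s‖ ≤ rr δ γ X Y Z →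
        ‖(PP1 δ γ X Y Z (n+1)).eval s - (PP1 δ γ X Y Z n).eval s‖ ≤ LL δ γ X Y Z * (1/2)^n ∧
        ‖(PP2 δ γ X Y Z (n+1)).eval s - (PP2 δ γ X Y Z n).eval s‖ ≤ LL δ γ X Y Z * (1/2)^n ∧
        ‖(PP3 δ γ X Y Z (n+1)).eval s - (PP3 δ γ X Y Z n).eval s‖ ≤ LL δ γ X Y Z * (1/2)^n := by
      intro s hs
      rw [PP1_eval, PP1_eval, PP2_eval, PP2_eval, PP3_eval, PP3_eval]
      exact f_lip δ γ X Y Z _ _ _ _ _ _ ((1/2)^n)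
        (hA' s hs) (hB' s hs) (hC' s hs) (hA s hs) (hB s hs) (hC s hs)
        (ih s hs).1 (ih s hs).2.1 (ih s hs).2.2
    have key : ∀ a b : Polynomial ℂ,
        (∀ s : ℂ, ‖s‖ ≤ rr δ γ X Y Z → ‖a.eval s - b.eval s‖ ≤ LL δ γ X Y Z * (1/2)^n) →
        ‖(pint a).eval t - (pint b).eval t‖ ≤ (1/2 : ℝ) ^ (n+1) := by
      intro a b hab
      have h1 : ‖(pint a).eval t - (pint b).eval t‖ ≤ ‖t‖ * (LL δ γ X Y Z * (1/2)^n) :=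
        pint_eval_sub_bound _ _ _ _ (fun s hs => hab _ (norm_smul_le_of_mem δ γ X Y Z s t hs ht))
      have hpow : (0:ℝ) ≤ (1/2:ℝ)^n := by positivity
      calc ‖(pint a).eval t - (pint b).eval t‖ ≤ ‖t‖ * (LL δ γ X Y Z * (1/2)^n) := h1
        _ ≤ rr δ γ X Y Z * (LL δ γ X Y Z * (1/2)^n) := by
            exact mul_le_mul_of_nonneg_right ht
              (mul_nonneg (LL_pos δ γ X Y Z).le hpow)
        _ = (rr δ γ X Y Z * LL δ γ X Y Z) * (1/2)^n := by ring
        _ ≤ (1/2) * (1/2)^n := mul_le_mul_of_nonneg_right (rr_LL δ γ X Y Z) hpow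
        _ = (1/2:ℝ)^(n+1) := by ring
    refine ⟨?_, ?_, ?_⟩
    · rw [pA_succ, pA_succ, add_sub_add_left_eq_sub]
      exact key _ _ (fun s hs => (lips s hs).1)
    · rw [pB_succ, pB_succ, add_sub_add_left_eq_sub]
      exact key _ _ (fun s hs => (lips s hs).2.1)
    · rw [pC_succ, pC_succ, add_sub_add_left_eq_sub]
      exact key _ _ (fun s hs => (lips s hs).2.2)

def xlim (t : ℂ) : ℂ := limUnder atTop (fun n => pA δ γ X Y Z n t)
def ylim (t : ℂ) : ℂ := limUnder atTop (fun n => pB δ γ X Y Z n t)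
def zlim (t : ℂ) : ℂ := limUnder atTop (fun n => pC δ γ X Y Z n t)

lemma cauchy_pA (t : ℂ) (ht : ‖t‖ ≤ rr δ γ X Y Z) :
    CauchySeq (fun n => pA δ γ X Y Z n t) :=
  cauchySeq_of_le_geometric (1/2) 1 (by norm_num) (fun n => by
    rw [dist_eq_norm, norm_sub_rev, one_mul]
    exact (diff_bound δ γ X Y Z n t ht).1)

lemma cauchy_pB (t : ℂ) (ht : ‖t‖ ≤ rr δ γ X Y Z) :
    CauchySeq (fun n => pB δ γ X Y Z n t) :=
  cauchySeq_of_le_geometric (1/2) 1 (by norm_num) (fun n => by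
    rw [dist_eq_norm, norm_sub_rev, one_mul]
    exact (diff_bound δ γ X Y Z n t ht).2.1)

lemma cauchy_pC (t : ℂ) (ht : ‖t‖ ≤ rr δ γ X Y Z) :
    CauchySeq (fun n => pC δ γ X Y Z n t) :=
  cauchySeq_of_le_geometric (1/2) 1 (by norm_num) (fun n => by
    rw [dist_eq_norm, norm_sub_rev, one_mul]
    exact (diff_bound δ γ X Y Z n t ht).2.2)

lemma tendsto_pA (t : ℂ) (ht : ‖t‖ ≤ rr δ γ X Y Z) :
    Filter.Tendsto (fun n => pA δ γ X Y Z n t) atTop (nhds (xlim δ γ X Y Z t)) :=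
  (cauchy_pA δ γ X Y Z t ht).tendsto_limUnder

lemma tendsto_pB (t : ℂ) (ht : ‖t‖ ≤ rr δ γ X Y Z) :
    Filter.Tendsto (fun n => pB δ γ X Y Z n t) atTop (nhds (ylim δ γ X Y Z t)) :=
  (cauchy_pB δ γ X Y Z t ht).tendsto_limUnder

lemma tendsto_pC (t : ℂ) (ht : ‖t‖ ≤ rr δ γ X Y Z) :
    Filter.Tendsto (fun n => pC δ γ X Y Z n t) atTop (nhds (zlim δ γ X Y Z t)) :=
  (cauchy_pC δ γ X Y Z t ht).tendsto_limUnder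

lemma tail_pA (t : ℂ) (ht : ‖t‖ ≤ rr δ γ X Y Z) (n : ℕ) :
    dist (pA δ γ X Y Z n t) (xlim δ γ X Y Z t) ≤ 2 * (1/2)^n := by
  have := dist_le_of_le_geometric_of_tendsto (1/2) 1 (by norm_num)
    (fun n => by
      rw [dist_eq_norm, norm_sub_rev, one_mul]
      exact (diff_bound δ γ X Y Z n t ht).1) (tendsto_pA δ γ X Y Z t ht) n
  calc dist (pA δ γ X Y Z n t) (xlim δ γ X Y Z t) ≤ 1 * (1/2)^n / (1 - 1/2) := this
    _ = 2 * (1/2)^n := by ring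

lemma tail_pB (t : ℂ) (ht : ‖t‖ ≤ rr δ γ X Y Z) (n : ℕ) :
    dist (pB δ γ X Y Z n t) (ylim δ γ X Y Z t) ≤ 2 * (1/2)^n := by
  have := dist_le_of_le_geometric_of_tendsto (1/2) 1 (by norm_num)
    (fun n => by
      rw [dist_eq_norm, norm_sub_rev, one_mul]
      exact (diff_bound δ γ X Y Z n t ht).2.1) (tendsto_pB δ γ X Y Z t ht) n
  calc dist (pB δ γ X Y Z n t) (ylim δ γ X Y Z t) ≤ 1 * (1/2)^n / (1 - 1/2) := this
    _ = 2 * (1/2)^n := by ring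

lemma tail_pC (t : ℂ) (ht : ‖t‖ ≤ rr δ γ X Y Z) (n : ℕ) :
    dist (pC δ γ X Y Z n t) (zlim δ γ X Y Z t) ≤ 2 * (1/2)^n := by
  have := dist_le_of_le_geometric_of_tendsto (1/2) 1 (by norm_num)
    (fun n => by
      rw [dist_eq_norm, norm_sub_rev, one_mul]
      exact (diff_bound δ γ X Y Z n t ht).2.2) (tendsto_pC δ γ X Y Z t ht) n
  calc dist (pC δ γ X Y Z n t) (zlim δ γ X Y Z t) ≤ 1 * (1/2)^n / (1 - 1/2) := this
    _ = 2 * (1/2)^n := by ring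

lemma lim_in_box (t : ℂ) (ht : ‖t‖ ≤ rr δ γ X Y Z) :
    ‖xlim δ γ X Y Z t‖ ≤ BB X Y Z ∧ ‖ylim δ γ X Y Z t‖ ≤ BB X Y Z ∧
      ‖zlim δ γ X Y Z t‖ ≤ BB X Y Z := by
  obtain ⟨hA, hB, hC⟩ := region_normB δ γ X Y Z 0
  refine ⟨?_, ?_, ?_⟩
  · exact le_of_tendsto ((tendsto_pA δ γ X Y Z t ht).norm)
      (Filter.Eventually.of_forall fun n => ((region_normB δ γ X Y Z n).1 t ht))
  · exact le_of_tendsto ((tendsto_pB δ γ X Y Z t ht).norm)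
      (Filter.Eventually.of_forall fun n => ((region_normB δ γ X Y Z n).2.1 t ht))
  · exact le_of_tendsto ((tendsto_pC δ γ X Y Z t ht).norm)
      (Filter.Eventually.of_forall fun n => ((region_normB δ γ X Y Z n).2.2 t ht))

lemma lim_at_zero : xlim δ γ X Y Z 0 = X ∧ ylim δ γ X Y Z 0 = Y ∧ zlim δ γ X Y Z 0 = Z := by
  have h0 : ‖(0:ℂ)‖ ≤ rr δ γ X Y Z := by simpa using (rr_pos δ γ X Y Z).le
  have e : ∀ n, pA δ γ X Y Z n 0 = X ∧ pB δ γ X Y Z n 0 = Y ∧ pC δ γ X Y Z n 0 = Z := by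
    intro n
    induction n with
    | zero => refine ⟨?_, ?_, ?_⟩ <;> simp [pA, pB, pC, pit]
    | succ n _ =>
      refine ⟨?_, ?_, ?_⟩
      · rw [pA_succ, pint_eval_zero, add_zero]
      · rw [pB_succ, pint_eval_zero, add_zero]
      · rw [pC_succ, pint_eval_zero, add_zero]
  refine ⟨?_, ?_, ?_⟩
  · refine tendsto_nhds_unique (tendsto_pA δ γ X Y Z 0 h0) ?_
    simp only [fun n => (e n).1]; exact tendsto_const_nhds
  · refine tendsto_nhds_unique (tendsto_pB δ γ X Y Z 0 h0) ?_
    simp only [fun n => (e n).2.1]; exact tendsto_const_nhds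
  · refine tendsto_nhds_unique (tendsto_pC δ γ X Y Z 0 h0) ?_
    simp only [fun n => (e n).2.2]; exact tendsto_const_nhds


lemma pit_hasDeriv (n : ℕ) (t : ℂ) :
    HasDerivAt (fun s => pA δ γ X Y Z (n+1) s)
      (f1 δ γ (pA δ γ X Y Z n t) (pB δ γ X Y Z n t) (pC δ γ X Y Z n t)) t ∧
    HasDerivAt (fun s => pB δ γ X Y Z (n+1) s)
      (f2 δ γ (pA δ γ X Y Z n t) (pB δ γ X Y Z n t) (pC δ γ X Y Z n t)) t ∧
    HasDerivAt (fun s => pC δ γ X Y Z (n+1) s)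
      (f3 (pA δ γ X Y Z n t) (pB δ γ X Y Z n t) (pC δ γ X Y Z n t)) t := by
  refine ⟨?_, ?_, ?_⟩
  · have h := (pint_hasDerivAt (PP1 δ γ X Y Z n) t).const_add X
    rw [PP1_eval] at h
    refine h.congr_of_eventuallyEq (Filter.Eventually.of_forall fun s => ?_)
    beta_reduce
    rw [pA_succ]
  · have h := (pint_hasDerivAt (PP2 δ γ X Y Z n) t).const_add Y
    rw [PP2_eval] at h
    refine h.congr_of_eventuallyEq (Filter.Eventually.of_forall fun s => ?_)
    beta_reduce
    rw [pB_succ]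
  · have h := (pint_hasDerivAt (PP3 δ γ X Y Z n) t).const_add Z
    rw [PP3_eval] at h
    refine h.congr_of_eventuallyEq (Filter.Eventually.of_forall fun s => ?_)
    beta_reduce
    rw [pC_succ]

lemma unif_conv :
    TendstoUniformlyOn (fun n t => f1 δ γ (pA δ γ X Y Z n t) (pB δ γ X Y Z n t) (pC δ γ X Y Z n t))
      (fun t => f1 δ γ (xlim δ γ X Y Z t) (ylim δ γ X Y Z t) (zlim δ γ X Y Z t)) atTop
      (Metric.ball (0:ℂ) (rr δ γ X Y Z)) ∧
    TendstoUniformlyOn (fun n t => f2 δ γ (pA δ γ X Y Z n t) (pB δ γ X Y Z n t) (pC δ γ X Y Z n t))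
      (fun t => f2 δ γ (xlim δ γ X Y Z t) (ylim δ γ X Y Z t) (zlim δ γ X Y Z t)) atTop
      (Metric.ball (0:ℂ) (rr δ γ X Y Z)) ∧
    TendstoUniformlyOn (fun n t => f3 (pA δ γ X Y Z n t) (pB δ γ X Y Z n t) (pC δ γ X Y Z n t))
      (fun t => f3 (xlim δ γ X Y Z t) (ylim δ γ X Y Z t) (zlim δ γ X Y Z t)) atTop
      (Metric.ball (0:ℂ) (rr δ γ X Y Z)) := by
  have main : ∀ n : ℕ, ∀ t : ℂ, ‖t‖ ≤ rr δ γ X Y Z →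
      ‖f1 δ γ (xlim δ γ X Y Z t) (ylim δ γ X Y Z t) (zlim δ γ X Y Z t)
        - f1 δ γ (pA δ γ X Y Z n t) (pB δ γ X Y Z n t) (pC δ γ X Y Z n t)‖
        ≤ LL δ γ X Y Z * (2 * (1/2)^n) ∧
      ‖f2 δ γ (xlim δ γ X Y Z t) (ylim δ γ X Y Z t) (zlim δ γ X Y Z t)
        - f2 δ γ (pA δ γ X Y Z n t) (pB δ γ X Y Z n t) (pC δ γ X Y Z n t)‖
        ≤ LL δ γ X Y Z * (2 * (1/2)^n) ∧
      ‖f3 (xlim δ γ X Y Z t) (ylim δ γ X Y Z t) (zlim δ γ X Y Z t)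
        - f3 (pA δ γ X Y Z n t) (pB δ γ X Y Z n t) (pC δ γ X Y Z n t)‖
        ≤ LL δ γ X Y Z * (2 * (1/2)^n) := by
    intro n t ht
    obtain ⟨b1, b2, b3⟩ := lim_in_box δ γ X Y Z t ht
    obtain ⟨c1, c2, c3⟩ := region_normB δ γ X Y Z n
    refine f_lip δ γ X Y Z _ _ _ _ _ _ (2 * (1/2)^n) b1 b2 b3 (c1 t ht) (c2 t ht) (c3 t ht)
      ?_ ?_ ?_
    · rw [← dist_eq_norm, dist_comm]; exact tail_pA δ γ X Y Z t ht n
    · rw [← dist_eq_norm, dist_comm]; exact tail_pB δ γ X Y Z t ht n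
    · rw [← dist_eq_norm, dist_comm]; exact tail_pC δ γ X Y Z t ht n
  have hto : Filter.Tendsto (fun n : ℕ => LL δ γ X Y Z * (2 * (1/2)^n)) atTop (nhds 0) := by
    have : Filter.Tendsto (fun n : ℕ => ((1:ℝ)/2)^n) atTop (nhds 0) :=
      tendsto_pow_atTop_nhds_zero_of_lt_one (by norm_num) (by norm_num)
    have h2 := this.const_mul (LL δ γ X Y Z * 2)
    simpa [mul_assoc] using h2
  have key : ∀ (F : ℕ → ℂ → ℂ) (G : ℂ → ℂ),
      (∀ n t, ‖t‖ ≤ rr δ γ X Y Z → ‖G t - F n t‖ ≤ LL δ γ X Y Z * (2 * (1/2)^n)) →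
      TendstoUniformlyOn F G atTop (Metric.ball (0:ℂ) (rr δ γ X Y Z)) := by
    intro F G hFG
    rw [Metric.tendstoUniformlyOn_iff]
    intro ε hε
    filter_upwards [hto.eventually (gt_mem_nhds hε)] with n hn t ht
    have ht' : ‖t‖ ≤ rr δ γ X Y Z := by
      rw [Metric.mem_ball, dist_zero_right] at ht
      exact ht.le
    calc dist (G t) (F n t) = ‖G t - F n t‖ := dist_eq_norm _ _
      _ ≤ LL δ γ X Y Z * (2 * (1/2)^n) := hFG n t ht'
      _ < ε := hn
  exact ⟨key _ _ (fun n t ht => (main n t ht).1), key _ _ (fun n t ht => (main n t ht).2.1),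
    key _ _ (fun n t ht => (main n t ht).2.2)⟩

theorem exists_sol (hX : X ≠ 0) :
    ∃ (U : Set ℂ) (x y z : ℂ → ℂ), IsOpen U ∧ IsConnected U ∧ (0:ℂ) ∈ U ∧
      solTWI δ γ x y z U ∧ (∀ t ∈ U, x t ≠ 0) ∧ x 0 = X ∧ y 0 = Y ∧ z 0 = Z := by
  have hrr := rr_pos δ γ X Y Z
  have hball : ∀ t : ℂ, t ∈ Metric.ball (0:ℂ) (rr δ γ X Y Z) → ‖t‖ ≤ rr δ γ X Y Z := by
    intro t ht
    rw [Metric.mem_ball, dist_zero_right] at ht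
    exact ht.le
  obtain ⟨u1, u2, u3⟩ := unif_conv δ γ X Y Z
  have hderiv : ∀ t ∈ Metric.ball (0:ℂ) (rr δ γ X Y Z),
      HasDerivAt (xlim δ γ X Y Z)
        (f1 δ γ (xlim δ γ X Y Z t) (ylim δ γ X Y Z t) (zlim δ γ X Y Z t)) t ∧
      HasDerivAt (ylim δ γ X Y Z)
        (f2 δ γ (xlim δ γ X Y Z t) (ylim δ γ X Y Z t) (zlim δ γ X Y Z t)) t ∧
      HasDerivAt (zlim δ γ X Y Z)
        (f3 (xlim δ γ X Y Z t) (ylim δ γ X Y Z t) (zlim δ γ X Y Z t)) t := by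
    intro t ht
    refine ⟨?_, ?_, ?_⟩
    · exact hasDerivAt_of_tendstoUniformlyOn Metric.isOpen_ball u1
        (Filter.Eventually.of_forall fun n u _ => (pit_hasDeriv δ γ X Y Z n u).1)
        (fun u hu => (tendsto_pA δ γ X Y Z u (hball u hu)).comp (tendsto_add_atTop_nat 1)) ht
    · exact hasDerivAt_of_tendstoUniformlyOn Metric.isOpen_ball u2
        (Filter.Eventually.of_forall fun n u _ => (pit_hasDeriv δ γ X Y Z n u).2.1)
        (fun u hu => (tendsto_pB δ γ X Y Z u (hball u hu)).comp (tendsto_add_atTop_nat 1)) ht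
    · exact hasDerivAt_of_tendstoUniformlyOn Metric.isOpen_ball u3
        (Filter.Eventually.of_forall fun n u _ => (pit_hasDeriv δ γ X Y Z n u).2.2)
        (fun u hu => (tendsto_pC δ γ X Y Z u (hball u hu)).comp (tendsto_add_atTop_nat 1)) ht
  obtain ⟨e1, e2, e3⟩ := lim_at_zero δ γ X Y Z
  -- continuity of xlim at 0 and nonvanishing
  have hcont : ContinuousAt (xlim δ γ X Y Z) 0 :=
    ((hderiv 0 (Metric.mem_ball_self hrr)).1).continuousAt
  have hne : ∀ᶠ u in nhds (0:ℂ), xlim δ γ X Y Z u ≠ 0 := by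
    apply hcont.eventually_ne
    rw [e1]; exact hX
  obtain ⟨ε, hε, hball2⟩ := Metric.eventually_nhds_iff_ball.mp hne
  set ρ := min ε (rr δ γ X Y Z) with hρ
  have hρpos : 0 < ρ := lt_min hε hrr
  refine ⟨Metric.ball (0:ℂ) ρ, xlim δ γ X Y Z, ylim δ γ X Y Z, zlim δ γ X Y Z,
    Metric.isOpen_ball, ⟨⟨0, Metric.mem_ball_self hρpos⟩, (convex_ball _ _).isPreconnected⟩,
    Metric.mem_ball_self hρpos, ?_, ?_, e1, e2, e3⟩
  · intro t ht
    have ht' : t ∈ Metric.ball (0:ℂ) (rr δ γ X Y Z) :=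
      Metric.ball_subset_ball (min_le_right _ _) ht
    exact hderiv t ht'
  · intro t ht
    exact hball2 t (Metric.ball_subset_ball (min_le_left _ _) ht)

def Q2 (δ γ : ℂ) : MvPolynomial (Fin 3) ℂ :=
  MvPolynomial.C (-δ*γ/2) * MvPolynomial.X 2 + MvPolynomial.C (-(4+γ)) * MvPolynomial.X 1
  + MvPolynomial.C (-δ^3*γ^2/4) * MvPolynomial.X 0
  + MvPolynomial.C 2 * MvPolynomial.X 0 * MvPolynomial.X 1 * MvPolynomial.X 2
  + MvPolynomial.C (δ^3*γ^3/4) * MvPolynomial.X 0^2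
  + MvPolynomial.C (3*δ^2*γ/2) * MvPolynomial.X 0^2 * MvPolynomial.X 1
  + MvPolynomial.C (-2*δ^2*γ^2) * MvPolynomial.X 0^3 * MvPolynomial.X 1
  + MvPolynomial.C (-2*δ) * MvPolynomial.X 0^3 * MvPolynomial.X 1^2
  + MvPolynomial.C (5*δ*γ) * MvPolynomial.X 0^4 * MvPolynomial.X 1^2
  + MvPolynomial.C (-4) * MvPolynomial.X 0^5 * MvPolynomial.X 1^3

def Q3 (δ γ : ℂ) : MvPolynomial (Fin 3) ℂ :=
  MvPolynomial.C (δ^2*γ) + MvPolynomial.C (2*γ) * MvPolynomial.X 2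
  + MvPolynomial.C (δ^2*γ) * MvPolynomial.X 0
  + MvPolynomial.C (-2*δ) * MvPolynomial.X 0 * MvPolynomial.X 1
  + MvPolynomial.C (-(δ^2*γ^2 + δ^2*γ^3)) * MvPolynomial.X 0^2
  + MvPolynomial.C (-2*δ + 2*δ*γ) * MvPolynomial.X 0^2 * MvPolynomial.X 1
  + MvPolynomial.C (4*δ*γ + 4*δ*γ^2) * MvPolynomial.X 0^3 * MvPolynomial.X 1
  + MvPolynomial.C (-4) * MvPolynomial.X 0^3 * MvPolynomial.X 1^2
  + MvPolynomial.C (-4) * MvPolynomial.X 0^4 * MvPolynomial.X 1^2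
  + MvPolynomial.C (-4*γ) * MvPolynomial.X 0^4 * MvPolynomial.X 1^2

lemma Q2_eval (δ γ u v w : ℂ) : MvPolynomial.eval ![u,v,w] (Q2 δ γ) =
    (-δ*γ/2) * w + (-(4+γ)) * v + (-δ^3*γ^2/4) * u + 2*u*v*w + (δ^3*γ^3/4) * u^2
    + (3*δ^2*γ/2) * u^2*v + (-2*δ^2*γ^2) * u^3*v + (-2*δ) * u^3*v^2
    + (5*δ*γ) * u^4*v^2 + (-4) * u^5*v^3 := by
  simp [Q2]

lemma Q3_eval (δ γ u v w : ℂ) : MvPolynomial.eval ![u,v,w] (Q3 δ γ) =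
    δ^2*γ + 2*γ*w + δ^2*γ*u + (-2*δ)*u*v + (-(δ^2*γ^2 + δ^2*γ^3))*u^2
    + (-2*δ + 2*δ*γ)*u^2*v + (4*δ*γ + 4*δ*γ^2)*u^3*v + (-4)*u^3*v^2
    + (-4)*u^4*v^2 + (-4*γ)*u^4*v^2 := by
  simp [Q3]

/-- central identity for v -/
lemma key2 (δ γ X Y Z : ℂ) (hX : X ≠ 0) :
    ((2*X*Y - δ*X + γ*Y)*X + (Y - δ/2)*(-2*Y^2 + γ*X + δ*Y + Z))*X
      + ((Y - δ/2)*X + δ*γ/2)*(-2*Y^2 + γ*X + δ*Y + Z)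
    = δ*γ*X + MvPolynomial.eval
        ![1/X, ((Y - δ/2)*X + δ*γ/2)*X, Z + X^2 + 2*(γ+1)*X] (Q2 δ γ) := by
  have hu : X * (1/X) = 1 := mul_one_div_cancel hX
  rw [Q2_eval]
  linear_combination ((-1)*Z*δ*γ + ((-1)/2)*Y*δ^2*γ + (1)*Y^2*δ*γ + ((-1)/4)*(1/X)*δ^3*γ^2 + ((1)/4)*(1/X)^2*δ^3*γ^3 + (-2)*X*δ*γ + (-2)*X*δ*γ^2 + (1)*X*Z*δ + (1)*X*Y*δ^2 + (-2)*X*Y*Z + (-4)*X*Y^2*δ + (4)*X*Y^3 + ((-1)/2)*X*(1/X)*Y*δ^2*γ + (1)*X*(1/X)*Y^2*δ*γ + ((1)/2)*X*(1/X)^2*δ^3*γ^2 + ((-3)/4)*X*(1/X)^3*δ^3*γ^3 + (2)*X^2*δ + (1)*X^2*δ*γ + (-4)*X^2*Y + (-4)*X^2*Y*γ + (1)*X^2*(1/X)*Y*δ^2 + (-4)*X^2*(1/X)*Y^2*δ + (4)*X^2*(1/X)*Y^3 + ((-3)/4)*X^2*(1/X)^2*δ^3*γ + (1)*X^2*(1/X)^2*Y*δ^2*γ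 + (1)*X^2*(1/X)^2*Y^2*δ*γ + (1)*X^2*(1/X)^3*δ^3*γ^2 + (-2)*X^2*(1/X)^3*Y*δ^2*γ^2 + ((1)/2)*X^2*(1/X)^4*δ^3*γ^3 + (1)*X^3*δ + (-2)*X^3*Y + (1)*X^3*(1/X)^2*Y*δ^2 + (-4)*X^3*(1/X)^2*Y^2*δ + (4)*X^3*(1/X)^2*Y^3 + ((1)/4)*X^3*(1/X)^3*δ^3*γ + (-1)*X^3*(1/X)^3*Y*δ^2*γ + (1)*X^3*(1/X)^3*Y^2*δ*γ + ((-3)/2)*X^3*(1/X)^4*δ^3*γ^2 + (3)*X^3*(1/X)^4*Y*δ^2*γ^2 + ((-1)/2)*X^4*(1/X)^3*δ^3 + (3)*X^4*(1/X)^3*Y*δ^2 + (-6)*X^4*(1/X)^3*Y^2*δ + (4)*X^4*(1/X)^3*Y^3 + ((3)/2)*X^4*(1/X)^4*δ^3*γ + (-6)*X^4*(1/X)^4*Y*δ^2*γ + (6)*X^4*(1/X)^4*Y^2*δ*γ + ((-1)/2)*X^5*(1/X)^4*δ^3 + (3)*X^5*(1/X)^4*Y*δ^2 + (-6)*X^5*(1/X)^4*Y^2*δ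 + (4)*X^5*(1/X)^4*Y^3) * hu

/-- central identity for w -/
lemma key3 (δ γ X Y Z : ℂ) (hX : X ≠ 0) :
    (-2*X*Z - 2*Z) + (2*X*(-2*Y^2 + γ*X + δ*Y + Z) + 2*(γ+1)*(-2*Y^2 + γ*X + δ*Y + Z))
    = -2*γ*(γ+1)*X + MvPolynomial.eval
        ![1/X, ((Y - δ/2)*X + δ*γ/2)*X, Z + X^2 + 2*(γ+1)*X] (Q3 δ γ) := by
  have hu : X * (1/X) = 1 := mul_one_div_cancel hX
  rw [Q3_eval]
  linear_combination ((1)*δ^2*γ + (-2)*Y*δ + (-2)*Y*δ*γ + (4)*Y^2 + (4)*Y^2*γ + (1)*(1/X)*δ^2*γ + (-1)*(1/X)^2*δ^2*γ^2 + (-1)*(1/X)^2*δ^2*γ^3 + (-2)*X*Y*δ + (4)*X*Y^2 + (-2)*X*(1/X)*Y*δ + (-2)*X*(1/X)*Y*δ*γ + (4)*X*(1/X)*Y^2 + (4)*X*(1/X)*Y^2*γ + (1)*X*(1/X)^2*δ^2*γ^2 + (1)*X*(1/X)^3*δ^2*γ^2 + (1)*X*(1/X)^3*δ^2*γ^3 +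 (1)*X^2*(1/X)*δ^2 + (-4)*X^2*(1/X)*Y*δ + (4)*X^2*(1/X)*Y^2 + (1)*X^2*(1/X)^2*δ^2 + (-1)*X^2*(1/X)^2*δ^2*γ + (-4)*X^2*(1/X)^2*Y*δ + (4)*X^2*(1/X)^2*Y^2 + (4)*X^2*(1/X)^2*Y^2*γ + (-2)*X^2*(1/X)^3*δ^2*γ + (-2)*X^2*(1/X)^3*δ^2*γ^2 + (4)*X^2*(1/X)^3*Y*δ*γ + (4)*X^2*(1/X)^3*Y*δ*γ^2 + (1)*X^3*(1/X)^2*δ^2 + (-4)*X^3*(1/X)^2*Y*δ + (4)*X^3*(1/X)^2*Y^2 + (1)*X^3*(1/X)^3*δ^2 + (1)*X^3*(1/X)^3*δ^2*γ + (-4)*X^3*(1/X)^3*Y*δ + (-4)*X^3*(1/X)^3*Y*δ*γ + (4)*X^3*(1/X)^3*Y^2 + (4)*X^3*(1/X)^3*Y^2*γ) * hu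

lemma continuous_eval3 (g : MvPolynomial (Fin 3) ℂ) :
    Continuous fun u : ℂ => MvPolynomial.eval ![u, 0, 0] g := by
  have e : (fun u : ℂ => MvPolynomial.eval ![u, 0, 0] g)
      = fun u => ∑ m ∈ g.support, g.coeff m * ∏ i, (![u, 0, 0] i) ^ (m i) := by
    funext u
    rw [MvPolynomial.eval_eq']
  rw [e]
  refine continuous_finset_sum _ fun m _ => Continuous.mul continuous_const ?_
  refine continuous_finset_prod _ fun i _ => Continuous.pow ?_ _
  fin_cases i
  · simpa using continuous_id'
  · simpa using continuous_const
  · simpa using continuous_const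

lemma coeff_vanish (g Q : MvPolynomial (Fin 3) ℂ) (c : ℂ)
    (h : ∀ X : ℂ, X ≠ 0 → MvPolynomial.eval ![1/X, 0, 0] g
      = c * X + MvPolynomial.eval ![1/X, 0, 0] Q) : c = 0 := by
  set f : ℂ → ℂ := fun u => u * (MvPolynomial.eval ![u,0,0] g - MvPolynomial.eval ![u,0,0] Q)
    with hf
  have hfc : Continuous f :=
    continuous_id.mul ((continuous_eval3 g).sub (continuous_eval3 Q))
  have hval : ∀ u : ℂ, u ≠ 0 → f u = c := by
    intro u hu
    have hX : (1:ℂ)/u ≠ 0 := one_div_ne_zero hu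
    have h1 := h (1/u) hX
    rw [one_div_one_div] at h1
    rw [hf]
    simp only
    rw [h1]
    field_simp
    ring
  have h1 : Tendsto f (𝓝[≠] (0:ℂ)) (𝓝 0) := by
    have h0 : Tendsto f (𝓝[≠] (0:ℂ)) (𝓝 (f 0)) :=
      (hfc.tendsto 0).mono_left (nhdsWithin_le_nhds (s := {(0:ℂ)}ᶜ))
    simpa [hf] using h0
  have h2 : Tendsto f (𝓝[≠] (0:ℂ)) (𝓝 c) := by
    refine Tendsto.congr' ?_ tendsto_const_nhds
    filter_upwards [self_mem_nhdsWithin] with u hu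
    exact (hval u hu).symm
  exact (tendsto_nhds_unique h2 h1)


theorem stmt4 (δ γ : ℂ) :
    ((∃ g₂ g₃ : MvPolynomial (Fin 3) ℂ,
        ∀ (U : Set ℂ), IsOpen U → IsConnected U →
        ∀ x y z : ℂ → ℂ, solTWI δ γ x y z U → (∀ t ∈ U, x t ≠ 0) →
        ∀ t ∈ U,
          HasDerivAt (fun s => ((y s - δ / 2) * x s + δ * γ / 2) * x s)
            (MvPolynomial.eval
              ![1 / x t, ((y t - δ / 2) * x t + δ * γ / 2) * x t,
                z t + (x t) ^ 2 + 2 * (γ + 1) * x t] g₂) t ∧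
          HasDerivAt (fun s => z s + (x s) ^ 2 + 2 * (γ + 1) * x s)
            (MvPolynomial.eval
              ![1 / x t, ((y t - δ / 2) * x t + δ * γ / 2) * x t,
                z t + (x t) ^ 2 + 2 * (γ + 1) * x t] g₃) t)
      ↔ (δ * γ = 0 ∧ γ * (γ + 1) = 0)) ∧
    ((δ * γ = 0 ∧ γ * (γ + 1) = 0) ↔ (γ = 0 ∨ (δ = 0 ∧ γ = -1))) := by
  constructor
  · constructor
    · rintro ⟨g₂, g₃, H⟩
      have main : ∀ X : ℂ, X ≠ 0 →
          (MvPolynomial.eval ![1/X, 0, 0] g₂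
            = (δ*γ) * X + MvPolynomial.eval ![1/X,0,0] (Q2 δ γ)) ∧
          (MvPolynomial.eval ![1/X, 0, 0] g₃
            = (-2*γ*(γ+1)) * X + MvPolynomial.eval ![1/X,0,0] (Q3 δ γ)) := by
        intro X hX
        set Y : ℂ := δ/2 - δ*γ/(2*X) with hY
        set Z : ℂ := -X^2 - 2*(γ+1)*X with hZ
        obtain ⟨U, x, y, z, hUo, hUc, h0U, hsol, hxne, hx0, hy0, hz0⟩ :=
          exists_sol δ γ X Y Z hX
        obtain ⟨H2, H3⟩ := H U hUo hUc x y z hsol hxne 0 h0U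
        obtain ⟨hx, hy, hz⟩ := hsol 0 h0U
        have hv0 : ((Y - δ/2) * X + δ*γ/2) * X = 0 := by
          rw [hY]; field_simp; ring
        have hw0 : Z + X^2 + 2*(γ+1)*X = 0 := by rw [hZ]; ring
        constructor
        · have hv := (((hy.sub_const (δ/2)).mul hx).add_const (δ*γ/2)).mul hx
          have huniq := H2.unique hv
          simp only [Pi.mul_apply] at huniq
          rw [hx0, hy0, hz0] at huniq
          have k := key2 δ γ X Y Z hX
          rw [hv0, hw0] at huniq k
          exact huniq.trans k
        · have hw1 := (hz.add (hx.pow 2)).add (hx.const_mul (2*(γ+1)))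
          have hsh : (-2 * x 0 * z 0 - 2 * z 0 + (2:ℕ) * x 0 ^ (2-1)
                * (-2 * (y 0)^2 + γ * x 0 + δ * y 0 + z 0))
              + 2*(γ+1) * (-2 * (y 0)^2 + γ * x 0 + δ * y 0 + z 0)
              = (-2*(x 0)*(z 0) - 2*(z 0))
                + (2*(x 0)*(-2*(y 0)^2 + γ*(x 0) + δ*(y 0) + z 0)
                  + 2*(γ+1)*(-2*(y 0)^2 + γ*(x 0) + δ*(y 0) + z 0)) := by
            push_cast
            ring
          rw [hsh] at hw1
          have huniq := H3.unique hw1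
          rw [hx0, hy0, hz0] at huniq
          have k := key3 δ γ X Y Z hX
          rw [hv0, hw0] at huniq k
          exact huniq.trans k
      constructor
      · exact coeff_vanish g₂ (Q2 δ γ) (δ*γ) (fun X hX => (main X hX).1)
      · have := coeff_vanish g₃ (Q3 δ γ) (-2*γ*(γ+1)) (fun X hX => (main X hX).2)
        linear_combination (-1/2 : ℂ) * this
    · rintro ⟨hdg, hgg⟩
      refine ⟨Q2 δ γ, Q3 δ γ, ?_⟩
      intro U hUo hUc x y z hsol hxne t ht
      obtain ⟨hx, hy, hz⟩ := hsol t ht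
      have hX := hxne t ht
      constructor
      · have hv := (((hy.sub_const (δ/2)).mul hx).add_const (δ*γ/2)).mul hx
        have k := key2 δ γ (x t) (y t) (z t) hX
        have e : δ*γ*(x t) + MvPolynomial.eval
            ![1/(x t), ((y t - δ/2)*(x t) + δ*γ/2)*(x t), z t + (x t)^2 + 2*(γ+1)*(x t)] (Q2 δ γ)
            = MvPolynomial.eval
            ![1/(x t), ((y t - δ/2)*(x t) + δ*γ/2)*(x t), z t + (x t)^2 + 2*(γ+1)*(x t)] (Q2 δ γ) := by
          rw [hdg, zero_mul, zero_add]
        simp only [Pi.mul_apply] at hv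
        rwa [k.trans e] at hv
      · have hw1 := (hz.add (hx.pow 2)).add (hx.const_mul (2*(γ+1)))
        have hsh : (-2 * x t * z t - 2 * z t + (2:ℕ) * x t ^ (2-1)
              * (-2 * (y t)^2 + γ * x t + δ * y t + z t))
            + 2*(γ+1) * (-2 * (y t)^2 + γ * x t + δ * y t + z t)
            = (-2*(x t)*(z t) - 2*(z t))
              + (2*(x t)*(-2*(y t)^2 + γ*(x t) + δ*(y t) + z t)
                + 2*(γ+1)*(-2*(y t)^2 + γ*(x t) + δ*(y t) + z t)) := by
          push_cast
          ring
        rw [hsh] at hw1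
        have k := key3 δ γ (x t) (y t) (z t) hX
        have e : -2*γ*(γ+1)*(x t) + MvPolynomial.eval
            ![1/(x t), ((y t - δ/2)*(x t) + δ*γ/2)*(x t), z t + (x t)^2 + 2*(γ+1)*(x t)] (Q3 δ γ)
            = MvPolynomial.eval
            ![1/(x t), ((y t - δ/2)*(x t) + δ*γ/2)*(x t), z t + (x t)^2 + 2*(γ+1)*(x t)] (Q3 δ γ) := by
          rw [show (-2:ℂ)*γ*(γ+1)*(x t) = -2*(γ*(γ+1))*(x t) by ring, hgg]
          ring
        rwa [k.trans e] at hw1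
  · constructor
    · rintro ⟨h1, h2⟩
      rcases mul_eq_zero.mp h2 with h | h
      · exact Or.inl h
      · have hγ : γ = -1 := by linear_combination h
        right
        refine ⟨?_, hγ⟩
        rw [hγ] at h1
        have := mul_eq_zero.mp h1
        rcases this with h' | h'
        · exact h'
        · exact absurd h' (by norm_num)
    · rintro (h | ⟨h1, h2⟩)
      · rw [h]; constructor <;> ring
      · rw [h1, h2]; constructor <;> ring
end Exist
end
end

section
/- Let δ, γ ∈ ℂ satisfy condition (C): γ = 0, or (δ, γ) = (0, −1). There exist polynomials P₁, P₂, P₃ ∈ ℂ[X, Y, Z] (depending only on δ, γ) such that for every solution (x, y, z) of the reduced three-wave interaction system (1) on a connected open set U ⊆ ℂ with x nonvanishing, the functions x₁ = 1/x, y₁ = −(y − √−1·x)x, z₁ = zx satisfy dx₁/dt = P₁(x₁, y₁, z₁), dy₁/dt = P₂(x₁, y₁, z₁), dz₁/dt = P₃(x₁, y₁, z₁) on U. -/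
open Complex

noncomputable section

theorem stmt5 (δ γ : ℂ) (hC : γ = 0 ∨ (δ = 0 ∧ γ = -1)) :
    ∃ P₁ P₂ P₃ : MvPolynomial (Fin 3) ℂ,
      ∀ (U : Set ℂ), IsOpen U → IsConnected U →
      ∀ x y z : ℂ → ℂ, solTWI δ γ x y z U → (∀ t ∈ U, x t ≠ 0) →
      ∀ t ∈ U,
        HasDerivAt (fun s => 1 / x s)
          (MvPolynomial.eval ![1 / x t, -(y t - I * x t) * x t, z t * x t] P₁) t ∧
        HasDerivAt (fun s => -(y s - I * x s) * x s)
          (MvPolynomial.eval ![1 / x t, -(y t - I * x t) * x t, z t * x t] P₂) t ∧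
        HasDerivAt (fun s => z s * x s)
          (MvPolynomial.eval ![1 / x t, -(y t - I * x t) * x t, z t * x t] P₃) t := by
  classical
  set X0 : MvPolynomial (Fin 3) ℂ := MvPolynomial.X 0
  set X1 : MvPolynomial (Fin 3) ℂ := MvPolynomial.X 1
  set X2 : MvPolynomial (Fin 3) ℂ := MvPolynomial.X 2
  refine ⟨MvPolynomial.C (-2) - MvPolynomial.C (γ + I*δ) * X0 + MvPolynomial.C δ * X1 * X0^3
      - X2 * X0^3 - MvPolynomial.C (4*I) * X1 * X0^2 + MvPolynomial.C 2 * X1^2 * X0^4,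
    MvPolynomial.C (2*γ) * X1 + MvPolynomial.C I * X2 + MvPolynomial.C (2*I) * X1^2 * X0
      - MvPolynomial.C δ * X1^2 * X0^2 + X1 * X2 * X0^2 - MvPolynomial.C 2 * X1^3 * X0^3,
    MvPolynomial.C (γ + I*δ - 2) * X2 + MvPolynomial.C (4*I) * X1 * X2 * X0
      - MvPolynomial.C δ * X1 * X2 * X0^2 + X2^2 * X0^2 - MvPolynomial.C 2 * X1^2 * X2 * X0^3,
    ?_⟩
  intro U _ _ x y z hsol hx0 t ht
  obtain ⟨hx, hy, hz⟩ := hsol t ht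
  have hxt : x t ≠ 0 := hx0 t ht
  have hu : x t * (1 / x t) = 1 := by field_simp
  refine ⟨?_, ?_, ?_⟩
  · have e : (fun s => 1 / x s) = fun s => (x s)⁻¹ := by
      funext s; rw [one_div]
    rw [e]
    refine HasDerivAt.congr_deriv (hx.inv hxt) (Eq.symm ?_)
    simp only [X0, X1, X2, MvPolynomial.eval_add, MvPolynomial.eval_sub,
      MvPolynomial.eval_mul, MvPolynomial.eval_pow, MvPolynomial.eval_C,
      MvPolynomial.eval_X, Matrix.cons_val_zero, Matrix.cons_val_one,
      Matrix.head_cons]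
    rw [show ((![1 / x t, -(y t - I * x t) * x t, z t * x t] : Fin 3 → ℂ) 2) = z t * x t from rfl]
    linear_combination (norm := ring) ((-2)*I^2 + (1/x t)*δ*I + (1/x t)*γ + (-1)*(1/x t)^2*(z t) + (-1)*(1/x t)^2*(y t)*δ + 2*(1/x t)^2*(y t)^2 + (-2)*(x t)*(1/x t)*I^2 + (x t)*(1/x t)^2*δ*I + (-4)*(x t)*(1/x t)^2*(y t)*I + 2*(x t)*(1/x t)^3*(y t)^2 + 2*(x t)^2*(1/x t)^2*I^2 + (-4)*(x t)^2*(1/x t)^3*(y t)*I + 2*(x t)^3*(1/x t)^3*I^2) * hu + ((-2)) * Complex.I_sq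
  · refine HasDerivAt.congr_deriv ((hy.sub (hx.const_mul I)).neg.mul hx) (Eq.symm ?_)
    simp only [X0, X1, X2, MvPolynomial.eval_add, MvPolynomial.eval_sub,
      MvPolynomial.eval_mul, MvPolynomial.eval_pow, MvPolynomial.eval_C,
      MvPolynomial.eval_X, Matrix.cons_val_zero, Matrix.cons_val_one,
      Matrix.head_cons, Pi.neg_apply, Pi.sub_apply]
    rw [show ((![1 / x t, -(y t - I * x t) * x t, z t * x t] : Fin 3 → ℂ) 2) = z t * x t from rfl]
    linear_combination (norm := ring) ((-1)*(y t)*(z t) + (-1)*(y t)^2*δ + 2*(y t)^3 + (x t)*(z t)*I + 2*(x t)*(y t)*δ*I + (-4)*(x t)*(y t)^2*I + (-1)*(x t)*(1/x t)*(y t)*(z t) + (-1)*(x t)*(1/x t)*(y t)^2*δ + 2*(x t)*(1/x t)*(y t)^3 + (-1)*(x t)^2*δ*I^2 + 2*(x t)^2*(y t)*I^2 + (x t)^2*(1/x t)*(z t)*I + 2*(x t)^2*(1/x t)*(y t)*δ*I + (-6)*(x t)^2*(1/x t)*(y t)^2*I + 2*(x t)^2*(1/x t)^2*(y t)^3 +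 (-1)*(x t)^3*(1/x t)*δ*I^2 + 6*(x t)^3*(1/x t)*(y t)*I^2 + (-6)*(x t)^3*(1/x t)^2*(y t)^2*I + (-2)*(x t)^4*(1/x t)*I^3 + 6*(x t)^4*(1/x t)^2*(y t)*I^2 + (-2)*(x t)^5*(1/x t)^2*I^3) * hu + ((-1)*(x t)^2*δ + 2*(x t)^2*(y t)) * Complex.I_sq
  · refine HasDerivAt.congr_deriv (hz.mul hx) (Eq.symm ?_)
    simp only [X0, X1, X2, MvPolynomial.eval_add, MvPolynomial.eval_sub,
      MvPolynomial.eval_mul, MvPolynomial.eval_pow, MvPolynomial.eval_C,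
      MvPolynomial.eval_X, Matrix.cons_val_zero, Matrix.cons_val_one,
      Matrix.head_cons]
    rw [show ((![1 / x t, -(y t - I * x t) * x t, z t * x t] : Fin 3 → ℂ) 2) = z t * x t from rfl]
    linear_combination (norm := ring) ((z t)^2 + (y t)*(z t)*δ + (-2)*(y t)^2*(z t) + (-1)*(x t)*(z t)*δ*I + (x t)*(1/x t)*(z t)^2 + (x t)*(1/x t)*(y t)*(z t)*δ + (-2)*(x t)*(1/x t)*(y t)^2*(z t) + 2*(x t)^2*(z t)*I^2 + (-1)*(x t)^2*(1/x t)*(z t)*δ*I + 4*(x t)^2*(1/x t)*(y t)*(z t)*I + (-2)*(x t)^2*(1/x t)^2*(y t)^2*(z t) + (-2)*(x t)^3*(1/x t)*(z t)*I^2 + 4*(x t)^3*(1/x t)^2*(y t)*(z t)*I + (-2)*(x t)^4*(1/x t)^2*(z t)*I^2) * hu + (2*(x t)^2*(z t)) * Complex.I_sq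
end
end

section
/- Let δ, γ ∈ ℂ satisfy condition (C): γ = 0, or (δ, γ) = (0, −1). There exist polynomials P₁, P₂, P₃ ∈ ℂ[X, Y, Z] (depending only on δ, γ) such that for every solution (x, y, z) of the reduced three-wave interaction system (1) on a connected open set U ⊆ ℂ with x nonvanishing, the functions x₃ = 1/x, y₃ = −((y − δ/2)x + δγ/2)x, z₃ = z + x² + 2(γ+1)x satisfy dx₃/dt = P₁(x₃, y₃, z₃), dy₃/dt = P₂(x₃, y₃, z₃), dz₃/dt = P₃(x₃, y₃, z₃) on U. -/
open Complex

noncomputable section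

set_option maxHeartbeats 1000000 in
theorem stmt7 (δ γ : ℂ) (hC : γ = 0 ∨ (δ = 0 ∧ γ = -1)) :
    ∃ P₁ P₂ P₃ : MvPolynomial (Fin 3) ℂ,
      ∀ (U : Set ℂ), IsOpen U → IsConnected U →
      ∀ x y z : ℂ → ℂ, solTWI δ γ x y z U → (∀ t ∈ U, x t ≠ 0) →
      ∀ t ∈ U,
        HasDerivAt (fun s => 1 / x s)
          (MvPolynomial.eval ![1 / x t, -((y t - δ / 2) * x t + δ * γ / 2) * x t, z t + (x t) ^ 2 + 2 * (γ + 1) * x t] P₁) t ∧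
        HasDerivAt (fun s => -((y s - δ / 2) * x s + δ * γ / 2) * x s)
          (MvPolynomial.eval ![1 / x t, -((y t - δ / 2) * x t + δ * γ / 2) * x t, z t + (x t) ^ 2 + 2 * (γ + 1) * x t] P₂) t ∧
        HasDerivAt (fun s => z s + (x s) ^ 2 + 2 * (γ + 1) * x s)
          (MvPolynomial.eval ![1 / x t, -((y t - δ / 2) * x t + δ * γ / 2) * x t, z t + (x t) ^ 2 + 2 * (γ + 1) * x t] P₃) t := by
  classical
  rcases hC with hγ | ⟨hδ, hγ⟩
  · subst hγ
    refine ⟨1 + 2 * MvPolynomial.X 0 - MvPolynomial.X 2 * (MvPolynomial.X 0) ^ 2 - MvPolynomial.C δ * MvPolynomial.X 1 * (MvPolynomial.X 0) ^ 4 + 2 * (MvPolynomial.X 1) ^ 2 * (MvPolynomial.X 0) ^ 6, 2 * MvPolynomial.C δ * (MvPolynomial.X 1) ^ 2 * (MvPolynomial.X 0) ^ 3 - 4 * (MvPolynomial.X 1) ^ 3 * (MvPolynomial.X 0) ^ 5 + 2 * MvPolynomial.X 1 * MvPolynomial.X 2 * MvPolynomial.X 0 - 4 * MvPolynomial.X 1,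 2 * MvPolynomial.C δ * MvPolynomial.X 1 * MvPolynomial.X 0 - 4 * (MvPolynomial.X 1) ^ 2 * (MvPolynomial.X 0) ^ 3 + 2 * MvPolynomial.C δ * MvPolynomial.X 1 * (MvPolynomial.X 0) ^ 2 - 4 * (MvPolynomial.X 1) ^ 2 * (MvPolynomial.X 0) ^ 4, ?_⟩
    intro U hU hUc x y z hsol hx0 t ht
    obtain ⟨hx, hy, hz⟩ := hsol t ht
    have ha := hx0 t ht
    have hu : x t * (1 / x t) = 1 := by field_simp
    refine ⟨?_, ?_, ?_⟩
    · have h : HasDerivAt (fun s => 1 / x s)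
          (-(-2 * (y t) ^ 2 + ((0:ℂ)) * x t + (δ) * y t + z t) / x t ^ 2) t := by
        simpa [one_div, Pi.inv_def] using hx.inv ha
      convert h using 1
      simp only [MvPolynomial.eval_add, MvPolynomial.eval_sub, MvPolynomial.eval_mul,
        MvPolynomial.eval_neg, MvPolynomial.eval_pow, MvPolynomial.eval_C, MvPolynomial.eval_X,
        map_one, map_ofNat, Matrix.cons_val_zero, Matrix.cons_val_one, Matrix.head_cons,
        Matrix.cons_val_two, Matrix.tail_cons]
      linear_combination ((-1:ℂ) + (-2:ℂ)*(1/(x t)) + (-1:ℂ)*(1/(x t))*(x t) + (-1:ℂ)*(1/(x t))*(1/(x t))*(y t)*δ + (2:ℂ)*(1/(x t))*(1/(x t))*(y t)*(y t) + (-1:ℂ)*(1/(x t))*(1/(x t))*(1/(x t))*(x t)*(y t)*δ + (2:ℂ)*(1/(x t))*(1/(x t))*(1/(x t))*(x t)*(y t)*(y t) + (1/2:ℂ)*(1/(x t))*(1/(x t))*(1/(x t))*(1/(x t))*(x t)*(x t)*δ*δ + (-2:ℂ)*(1/(x t))*(1/(x t))*(1/(x t))*(1/(x t))*(x t)*(x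 t)*(y t)*δ + (2:ℂ)*(1/(x t))*(1/(x t))*(1/(x t))*(1/(x t))*(x t)*(x t)*(y t)*(y t) + (1/2:ℂ)*(1/(x t))*(1/(x t))*(1/(x t))*(1/(x t))*(1/(x t))*(x t)*(x t)*(x t)*δ*δ + (-2:ℂ)*(1/(x t))*(1/(x t))*(1/(x t))*(1/(x t))*(1/(x t))*(x t)*(x t)*(x t)*(y t)*δ + (2:ℂ)*(1/(x t))*(1/(x t))*(1/(x t))*(1/(x t))*(1/(x t))*(x t)*(x t)*(x t)*(y t)*(y t)) * hu
    · have h := ((((hy.sub_const ((δ) / 2)).mul hx).add_const (δ * 0 / 2)).neg).mul hx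
      refine h.congr_deriv (Eq.symm ?_)
      simp only [MvPolynomial.eval_add, MvPolynomial.eval_sub, MvPolynomial.eval_mul,
        MvPolynomial.eval_neg, MvPolynomial.eval_pow, MvPolynomial.eval_C, MvPolynomial.eval_X,
        map_one, map_ofNat, Matrix.cons_val_zero, Matrix.cons_val_one, Matrix.head_cons,
        Matrix.cons_val_two, Matrix.tail_cons, Pi.neg_apply, Pi.mul_apply]
      linear_combination ((1:ℂ)*(x t)*(z t)*δ + (1:ℂ)*(x t)*(y t)*δ*δ + (-2:ℂ)*(x t)*(y t)*(z t) + (-4:ℂ)*(x t)*(y t)*(y t)*δ + (4:ℂ)*(x t)*(y t)*(y t)*(y t) + (2:ℂ)*(x t)*(x t)*δ + (-4:ℂ)*(x t)*(x t)*(y t) + (1:ℂ)*(x t)*(x t)*(x t)*δ + (-2:ℂ)*(x t)*(x t)*(x t)*(y t) + (1:ℂ)*(1/(x t))*(x t)*(x t)*(y t)*δ*δ + (-4:ℂ)*(1/(x t))*(x t)*(x t)*(y t)*(y t)*δ + (4:ℂ)*(1/(x t))*(x t)*(x t)*(y t)*(y t)*(y t) + (1:ℂ)*(1/(x t))*(1/(x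 t))*(x t)*(x t)*(x t)*(y t)*δ*δ + (-4:ℂ)*(1/(x t))*(1/(x t))*(x t)*(x t)*(x t)*(y t)*(y t)*δ + (4:ℂ)*(1/(x t))*(1/(x t))*(x t)*(x t)*(x t)*(y t)*(y t)*(y t) + (-1/2:ℂ)*(1/(x t))*(1/(x t))*(1/(x t))*(x t)*(x t)*(x t)*(x t)*δ*δ*δ + (3:ℂ)*(1/(x t))*(1/(x t))*(1/(x t))*(x t)*(x t)*(x t)*(x t)*(y t)*δ*δ + (-6:ℂ)*(1/(x t))*(1/(x t))*(1/(x t))*(x t)*(x t)*(x t)*(x t)*(y t)*(y t)*δ + (4:ℂ)*(1/(x t))*(1/(x t))*(1/(x t))*(x t)*(x t)*(x t)*(x t)*(y t)*(y t)*(y t) + (-1/2:ℂ)*(1/(x t))*(1/(x t))*(1/(x t))*(1/(x t))*(x t)*(x t)*(x t)*(x t)*(x t)*δ*δ*δ + (3:ℂ)*(1/(x t))*(1/(x t))*(1/(x t))*(1/(x t))*(x t)*(x t)*(x t)*(x t)*(x t)*(y t)*δ*δ + (-6:ℂ)*(1/(x t))*(1/(x t))*(1/(x t))*(1/(x t))*(x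 t)*(x t)*(x t)*(x t)*(x t)*(y t)*(y t)*δ + (4:ℂ)*(1/(x t))*(1/(x t))*(1/(x t))*(1/(x t))*(x t)*(x t)*(x t)*(x t)*(x t)*(y t)*(y t)*(y t)) * hu
    · have h := (hz.add (hx.pow 2)).add (hx.const_mul (2 * ((0:ℂ) + 1)))
      refine h.congr_deriv (Eq.symm ?_)
      simp only [MvPolynomial.eval_add, MvPolynomial.eval_sub, MvPolynomial.eval_mul,
        MvPolynomial.eval_neg, MvPolynomial.eval_pow, MvPolynomial.eval_C, MvPolynomial.eval_X,
        map_one, map_ofNat, Matrix.cons_val_zero, Matrix.cons_val_one, Matrix.head_cons,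
        Matrix.cons_val_two, Matrix.tail_cons]
      linear_combination ((2:ℂ)*(y t)*δ + (-4:ℂ)*(y t)*(y t) + (2:ℂ)*(x t)*(y t)*δ + (-4:ℂ)*(x t)*(y t)*(y t) + (2:ℂ)*(1/(x t))*(x t)*(y t)*δ + (-4:ℂ)*(1/(x t))*(x t)*(y t)*(y t) + (-1:ℂ)*(1/(x t))*(x t)*(x t)*δ*δ + (4:ℂ)*(1/(x t))*(x t)*(x t)*(y t)*δ + (-4:ℂ)*(1/(x t))*(x t)*(x t)*(y t)*(y t) + (-1:ℂ)*(1/(x t))*(1/(x t))*(x t)*(x t)*δ*δ + (4:ℂ)*(1/(x t))*(1/(x t))*(x t)*(x t)*(y t)*δ + (-4:ℂ)*(1/(x t))*(1/(x t))*(x t)*(x t)*(y t)*(y t) + (-1:ℂ)*(1/(x t))*(1/(x t))*(x t)*(x t)*(x t)*δ*δ + (4:ℂ)*(1/(x t))*(1/(x t))*(x t)*(x t)*(x t)*(y t)*δ + (-4:ℂ)*(1/(x t))*(1/(x t))*(x t)*(x t)*(x t)*(y t)*(y t) + (-1:ℂ)*(1/(x t))*(1/(x t))*(1/(x t))*(x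 t)*(x t)*(x t)*δ*δ + (4:ℂ)*(1/(x t))*(1/(x t))*(1/(x t))*(x t)*(x t)*(x t)*(y t)*δ + (-4:ℂ)*(1/(x t))*(1/(x t))*(1/(x t))*(x t)*(x t)*(x t)*(y t)*(y t)) * hu
  · subst hδ; subst hγ
    refine ⟨1 + MvPolynomial.X 0 - MvPolynomial.X 2 * (MvPolynomial.X 0) ^ 2 + 2 * (MvPolynomial.X 1) ^ 2 * (MvPolynomial.X 0) ^ 6, -(4 * (MvPolynomial.X 1) ^ 3 * (MvPolynomial.X 0) ^ 5) + 2 * MvPolynomial.X 1 * MvPolynomial.X 2 * MvPolynomial.X 0 - 3 * MvPolynomial.X 1, -(2 * MvPolynomial.X 2) - 4 * (MvPolynomial.X 1) ^ 2 * (MvPolynomial.X 0) ^ 3, ?_⟩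
    intro U hU hUc x y z hsol hx0 t ht
    obtain ⟨hx, hy, hz⟩ := hsol t ht
    have ha := hx0 t ht
    have hu : x t * (1 / x t) = 1 := by field_simp
    refine ⟨?_, ?_, ?_⟩
    · have h : HasDerivAt (fun s => 1 / x s)
          (-(-2 * (y t) ^ 2 + ((-1:ℂ)) * x t + ((0:ℂ)) * y t + z t) / x t ^ 2) t := by
        simpa [one_div, Pi.inv_def] using hx.inv ha
      convert h using 1
      simp only [MvPolynomial.eval_add, MvPolynomial.eval_sub, MvPolynomial.eval_mul,
        MvPolynomial.eval_neg, MvPolynomial.eval_pow, MvPolynomial.eval_C, MvPolynomial.eval_X,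
        map_one, map_ofNat, Matrix.cons_val_zero, Matrix.cons_val_one, Matrix.head_cons,
        Matrix.cons_val_two, Matrix.tail_cons]
      linear_combination ((-1:ℂ) + (-1:ℂ)*(1/(x t)) + (-1:ℂ)*(1/(x t))*(x t) + (2:ℂ)*(1/(x t))*(1/(x t))*(y t)*(y t) + (2:ℂ)*(1/(x t))*(1/(x t))*(1/(x t))*(x t)*(y t)*(y t) + (2:ℂ)*(1/(x t))*(1/(x t))*(1/(x t))*(1/(x t))*(x t)*(x t)*(y t)*(y t) + (2:ℂ)*(1/(x t))*(1/(x t))*(1/(x t))*(1/(x t))*(1/(x t))*(x t)*(x t)*(x t)*(y t)*(y t)) * hu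
    · have h := ((((hy.sub_const (((0:ℂ)) / 2)).mul hx).add_const ((0:ℂ) * (-1) / 2)).neg).mul hx
      refine h.congr_deriv (Eq.symm ?_)
      simp only [MvPolynomial.eval_add, MvPolynomial.eval_sub, MvPolynomial.eval_mul,
        MvPolynomial.eval_neg, MvPolynomial.eval_pow, MvPolynomial.eval_C, MvPolynomial.eval_X,
        map_one, map_ofNat, Matrix.cons_val_zero, Matrix.cons_val_one, Matrix.head_cons,
        Matrix.cons_val_two, Matrix.tail_cons, Pi.neg_apply, Pi.mul_apply]
      linear_combination ((-2:ℂ)*(x t)*(y t)*(z t) + (4:ℂ)*(x t)*(y t)*(y t)*(y t) + (-2:ℂ)*(x t)*(x t)*(x t)*(y t) + (4:ℂ)*(1/(x t))*(x t)*(x t)*(y t)*(y t)*(y t) + (4:ℂ)*(1/(x t))*(1/(x t))*(x t)*(x t)*(x t)*(y t)*(y t)*(y t) + (4:ℂ)*(1/(x t))*(1/(x t))*(1/(x t))*(x t)*(x t)*(x t)*(x t)*(y t)*(y t)*(y t) + (4:ℂ)*(1/(x t))*(1/(x t))*(1/(x t))*(1/(x t))*(x t)*(x t)*(x t)*(x t)*(x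 t)*(y t)*(y t)*(y t)) * hu
    · have h := (hz.add (hx.pow 2)).add (hx.const_mul (2 * ((-1:ℂ) + 1)))
      refine h.congr_deriv (Eq.symm ?_)
      simp only [MvPolynomial.eval_add, MvPolynomial.eval_sub, MvPolynomial.eval_mul,
        MvPolynomial.eval_neg, MvPolynomial.eval_pow, MvPolynomial.eval_C, MvPolynomial.eval_X,
        map_one, map_ofNat, Matrix.cons_val_zero, Matrix.cons_val_one, Matrix.head_cons,
        Matrix.cons_val_two, Matrix.tail_cons]
      linear_combination ((-4:ℂ)*(x t)*(y t)*(y t) + (-4:ℂ)*(1/(x t))*(x t)*(x t)*(y t)*(y t) + (-4:ℂ)*(1/(x t))*(1/(x t))*(x t)*(x t)*(x t)*(y t)*(y t)) * hu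
end
end

section
/- Let δ, γ ∈ ℂ. Define the three maps on {(x,y,z) ∈ ℂ³ : x ≠ 0}: ψ₁(x,y,z) = (1/x, −(y − √−1·x)x, zx), ψ₂(x,y,z) = (1/x, −(y + √−1·x)x, zx), ψ₃(x,y,z) = (1/x, −((y − δ/2)x + δγ/2)x, z + x² + 2(γ+1)x). Then for each i = 1, 2, 3 and every (x,y,z) with x ≠ 0, the determinant of the Jacobian matrix of ψᵢ at (x,y,z) equals 1; equivalently, ψᵢ pulls back the volume form dx∧dy∧dz to dx∧dy∧dz. -/
open Complex

noncomputable section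

open ContinuousLinearMap in
theorem hasFDerivAt_vec3 {f0 f1 f2 : (Fin 3 → ℂ) → ℂ}
    {L0 L1 L2 : (Fin 3 → ℂ) →L[ℂ] ℂ} {P : Fin 3 → ℂ}
    (h0 : HasFDerivAt f0 L0 P) (h1 : HasFDerivAt f1 L1 P)
    (h2 : HasFDerivAt f2 L2 P) :
    HasFDerivAt (fun Q => ![f0 Q, f1 Q, f2 Q])
      (ContinuousLinearMap.pi ![L0, L1, L2]) P := by
  rw [hasFDerivAt_pi']
  intro i
  fin_cases i
  · simpa [ContinuousLinearMap.proj_pi] using h0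
  · simpa [ContinuousLinearMap.proj_pi] using h1
  · simpa [ContinuousLinearMap.proj_pi] using h2

theorem stmt8 (δ γ : ℂ) :
    ∀ P : Fin 3 → ℂ, P 0 ≠ 0 →
      (∃ L : (Fin 3 → ℂ) →L[ℂ] (Fin 3 → ℂ),
        HasFDerivAt (fun Q : Fin 3 → ℂ =>
          ![1 / Q 0, -(Q 1 - I * Q 0) * Q 0, Q 2 * Q 0]) L P ∧
        Matrix.det (Matrix.of fun i j => L (Pi.single j 1) i) = 1) ∧
      (∃ L : (Fin 3 → ℂ) →L[ℂ] (Fin 3 → ℂ),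
        HasFDerivAt (fun Q : Fin 3 → ℂ =>
          ![1 / Q 0, -(Q 1 + I * Q 0) * Q 0, Q 2 * Q 0]) L P ∧
        Matrix.det (Matrix.of fun i j => L (Pi.single j 1) i) = 1) ∧
      (∃ L : (Fin 3 → ℂ) →L[ℂ] (Fin 3 → ℂ),
        HasFDerivAt (fun Q : Fin 3 → ℂ =>
          ![1 / Q 0, -((Q 1 - δ / 2) * Q 0 + δ * γ / 2) * Q 0,
            Q 2 + (Q 0) ^ 2 + 2 * (γ + 1) * Q 0]) L P ∧
        Matrix.det (Matrix.of fun i j => L (Pi.single j 1) i) = 1) := by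
  intro P hx
  have hp0 : HasFDerivAt (fun Q : Fin 3 → ℂ => Q 0)
      (ContinuousLinearMap.proj (R := ℂ) (φ := fun _ : Fin 3 => ℂ) 0) P :=
      (ContinuousLinearMap.proj (R := ℂ) (φ := fun _ : Fin 3 => ℂ) 0).hasFDerivAt
  have hp1 : HasFDerivAt (fun Q : Fin 3 → ℂ => Q 1)
      (ContinuousLinearMap.proj (R := ℂ) (φ := fun _ : Fin 3 => ℂ) 1) P :=
      (ContinuousLinearMap.proj (R := ℂ) (φ := fun _ : Fin 3 => ℂ) 1).hasFDerivAt
  have hp2 : HasFDerivAt (fun Q : Fin 3 → ℂ => Q 2)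
      (ContinuousLinearMap.proj (R := ℂ) (φ := fun _ : Fin 3 => ℂ) 2) P :=
      (ContinuousLinearMap.proj (R := ℂ) (φ := fun _ : Fin 3 => ℂ) 2).hasFDerivAt
  have hinv : HasFDerivAt (fun Q : Fin 3 → ℂ => 1 / Q 0)
      (-((P 0 ^ 2)⁻¹ • ContinuousLinearMap.proj (R := ℂ) (φ := fun _ : Fin 3 => ℂ) 0)) P := by
    have h := (hasDerivAt_inv hx).comp_hasFDerivAt P hp0
    simp only [one_div, Function.comp_def] at h ⊢
    exact h.congr_fderiv (by ext v; simp)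
  have hsq : HasFDerivAt (fun Q : Fin 3 → ℂ => Q 0 ^ 2)
      ((P 0 • ContinuousLinearMap.proj (R := ℂ) (φ := fun _ : Fin 3 => ℂ) 0) +
        P 0 • ContinuousLinearMap.proj (R := ℂ) (φ := fun _ : Fin 3 => ℂ) 0) P := by
    simpa [pow_two] using hp0.fun_mul hp0
  refine ⟨⟨_, hasFDerivAt_vec3 hinv (((hp1.sub (hp0.const_mul I)).neg).mul hp0)
      (hp2.mul hp0), ?_⟩,
    ⟨_, hasFDerivAt_vec3 hinv (((hp1.add (hp0.const_mul I)).neg).mul hp0)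
      (hp2.mul hp0), ?_⟩,
    ⟨_, hasFDerivAt_vec3 hinv
      ((((hp1.sub_const (δ / 2)).mul hp0).add_const (δ * γ / 2)).neg.mul hp0)
      ((hp2.add hsq).add (hp0.const_mul (2 * (γ + 1)))), ?_⟩⟩ <;>
  · simp only [Matrix.det_fin_three, Matrix.of_apply, ContinuousLinearMap.pi_apply]
    simp [Pi.single_apply, Fin.isValue]
    field_simp
end
end

section
/- Let α₁, …, α₅ ∈ ℂ. Define on {(x,y,z) ∈ ℂ³ : x ≠ 0} the maps φ₁(x,y,z) = (1/x, −(y − √−1·x + α₁)x, (z + α₂)x), φ₂(x,y,z) = (1/x, −(y + √−1·x + α₃)x, (z + α₄)x), φ₃(x,y,z) = (1/x, −((y − α₅)x − √−1(α₂−α₄)/2)x, z + x² + √−1(α₁−α₃)x). Then for each i = 1, 2, 3 and every (x,y,z) with x ≠ 0, the determinant of the Jacobian matrix of φᵢ at (x,y,z) equals 1; equivalently, φᵢ pulls back the volume form dx∧dy∧dz to dx∧dy∧dz. -/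
open Complex

noncomputable section

private lemma pi3 {f0 f1 f2 : (Fin 3 → ℂ) → ℂ} {D0 D1 D2 : (Fin 3 → ℂ) →L[ℂ] ℂ}
    {P : Fin 3 → ℂ}
    (h0 : HasFDerivAt f0 D0 P) (h1 : HasFDerivAt f1 D1 P) (h2 : HasFDerivAt f2 D2 P) :
    HasFDerivAt (fun Q => ![f0 Q, f1 Q, f2 Q]) (ContinuousLinearMap.pi ![D0, D1, D2]) P := by
  apply hasFDerivAt_pi''
  intro i
  rw [ContinuousLinearMap.proj_pi]
  fin_cases i <;> simpa using (by assumption : HasFDerivAt _ _ P)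

theorem stmt15 (α₁ α₂ α₃ α₄ α₅ : ℂ) :
    ∀ P : Fin 3 → ℂ, P 0 ≠ 0 →
      (∃ L : (Fin 3 → ℂ) →L[ℂ] (Fin 3 → ℂ),
        HasFDerivAt (fun Q : Fin 3 → ℂ =>
          ![1 / Q 0, -(Q 1 - I * Q 0 + α₁) * Q 0, (Q 2 + α₂) * Q 0]) L P ∧
        Matrix.det (Matrix.of fun i j => L (Pi.single j 1) i) = 1) ∧
      (∃ L : (Fin 3 → ℂ) →L[ℂ] (Fin 3 → ℂ),
        HasFDerivAt (fun Q : Fin 3 → ℂ =>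
          ![1 / Q 0, -(Q 1 + I * Q 0 + α₃) * Q 0, (Q 2 + α₄) * Q 0]) L P ∧
        Matrix.det (Matrix.of fun i j => L (Pi.single j 1) i) = 1) ∧
      (∃ L : (Fin 3 → ℂ) →L[ℂ] (Fin 3 → ℂ),
        HasFDerivAt (fun Q : Fin 3 → ℂ =>
          ![1 / Q 0, -((Q 1 - α₅) * Q 0 - I * (α₂ - α₄) / 2) * Q 0,
            Q 2 + (Q 0) ^ 2 + I * (α₁ - α₃) * Q 0]) L P ∧
        Matrix.det (Matrix.of fun i j => L (Pi.single j 1) i) = 1) := by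
  intro P hP
  have h0 : HasFDerivAt (fun Q : Fin 3 → ℂ => 1 / Q 0)
      (-((P 0 ^ 2)⁻¹ • ContinuousLinearMap.proj (R := ℂ) (φ := fun _ : Fin 3 => ℂ) 0)) P := by
    simpa [one_div, Function.comp_def] using
      ((hasDerivAt_inv hP).comp_hasFDerivAt P (hasFDerivAt_apply (𝕜 := ℂ) 0 P)).congr_fderiv
        (g' := -((P 0 ^ 2)⁻¹ • ContinuousLinearMap.proj (R := ℂ) (φ := fun _ : Fin 3 => ℂ) 0))
        (ContinuousLinearMap.ext fun v => by simp)
  have h1a := ((((hasFDerivAt_apply 1 P).sub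
      ((hasFDerivAt_apply 0 P).const_mul I)).add_const α₁).neg).mul (hasFDerivAt_apply (𝕜 := ℂ) 0 P)
  have h2a := ((hasFDerivAt_apply 2 P).add_const α₂).mul (hasFDerivAt_apply (𝕜 := ℂ) 0 P)
  have h1b := ((((hasFDerivAt_apply 1 P).add
      ((hasFDerivAt_apply 0 P).const_mul I)).add_const α₃).neg).mul (hasFDerivAt_apply (𝕜 := ℂ) 0 P)
  have h2b := ((hasFDerivAt_apply 2 P).add_const α₄).mul (hasFDerivAt_apply (𝕜 := ℂ) 0 P)
  have h1c := ((((((hasFDerivAt_apply 1 P).sub_const α₅).mul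
      (hasFDerivAt_apply (𝕜 := ℂ) 0 P)).sub_const (I * (α₂ - α₄) / 2)).neg).mul (hasFDerivAt_apply (𝕜 := ℂ) 0 P))
  have hsq : HasFDerivAt (fun Q : Fin 3 → ℂ => Q 0 ^ 2)
      ((2 * P 0) • ContinuousLinearMap.proj (R := ℂ) (φ := fun _ : Fin 3 => ℂ) 0) P := by
    simpa [Function.comp_def] using
      (hasDerivAt_pow 2 (P 0)).comp_hasFDerivAt P (hasFDerivAt_apply (𝕜 := ℂ) 0 P)
  have h2c := (((hasFDerivAt_apply 2 P).add hsq).add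
      ((hasFDerivAt_apply (𝕜 := ℂ) 0 P).const_mul (I * (α₁ - α₃))))
  refine ⟨⟨_, pi3 h0 h1a h2a, ?_⟩, ⟨_, pi3 h0 h1b h2b, ?_⟩, ⟨_, pi3 h0 h1c h2c, ?_⟩⟩ <;>
  · simp [Matrix.det_fin_three, Pi.single_apply]
    field_simp
end
end
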